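/- arXiv:2506.13911 — 2 statements merged into one kernel-verified Lean document; each statement's English description precedes it below -/
import Mathlib

section
/- For all d ≥ 0 and r ≥ 1, the separating power of HES-GNN node classifiers of depth d and radius r equals that of graded hybrid subgraph logic sentences with radius r and at most d nested ↓_{W^r} operators: ρ(HES-GNN-(d,r)) = ρ(GML(↓^d_{W^r})). Moreover, ρ(HES-GNN with radius r, any depth) = ρ(GML(↓_{W^r})). -/
open Classical

/-! ### Graphs with `p` binary node features -/

/-- A finite undirected graph with node labels over `p` binary features. -/
structure LGraph (p : ℕ) : Type 1 where
  V : Type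
  fintypeV : Fintype V
  decEqV : DecidableEq V
  adj : V → V → Prop
  symm : ∀ {u v}, adj u v → adj v u
  irrefl : ∀ v, ¬ adj v v
  lab : V → Fin p → Prop

attribute [instance] LGraph.fintypeV LGraph.decEqV

namespace LGraph

variable {p : ℕ}

/-- The finset of neighbours of a node. -/
noncomputable def nbrFinset (G : LGraph p) (v : G.V) : Finset G.V :=
  Finset.univ.filter (fun u => G.adj v u)

/-- Multi-hot label encoding. -/
noncomputable def embG (G : LGraph p) (v : G.V) : Fin p → ℝ :=
  fun i => if G.lab v i then 1 else 0

/-- `G.within v r u` : node `u` is at distance at most `r` from `v`. -/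
def within (G : LGraph p) (v : G.V) : ℕ → G.V → Prop
  | 0 => fun u => u = v
  | (r+1) => fun u => G.within v r u ∨ ∃ w, G.within v r w ∧ G.adj w u

theorem within_self (G : LGraph p) (v : G.V) : ∀ r, G.within v r v
  | 0 => rfl
  | (r+1) => Or.inl (G.within_self v r)

/-- Induced subgraph on a set of nodes. -/
noncomputable def induce (G : LGraph p) (S : Set G.V) : LGraph p where
  V := {u // u ∈ S}
  fintypeV := Fintype.ofFinite _
  decEqV := inferInstance
  adj a b := G.adj a.1 b.1
  symm h := G.symm h
  irrefl a h := G.irrefl a.1 h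
  lab a := G.lab a.1

/-- `G_v^r` : the induced subgraph on the radius-`r` neighbourhood of `v`. -/
noncomputable def ball (G : LGraph p) (v : G.V) (r : ℕ) : LGraph p :=
  G.induce {u | G.within v r u}

/-- The centre of `G_v^r`, as a node of `G_v^r`. -/
noncomputable def ballCenter (G : LGraph p) (v : G.V) (r : ℕ) : (G.ball v r).V :=
  ⟨v, G.within_self v r⟩

end LGraph

/-! ### GNNs -/

/-- A single message-passing layer: aggregation over the multiset of neighbour
embeddings and combination of the node embedding (concatenated via `Fin.append`)
with the aggregated value. -/
structure GNNLayer (Din Dout : ℕ) : Type where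
  agg : Multiset (Fin Din → ℝ) → (Fin Din → ℝ)
  com : (Fin (Din + Din) → ℝ) → (Fin Dout → ℝ)

/-- A `(D,D')`-GNN: a nonempty sequence of layers with matching dimensions. -/
inductive GNN : ℕ → ℕ → Type
  | last {D D'} (l : GNNLayer D D') : GNN D D'
  | cons {D Dm D'} (l : GNNLayer D Dm) (rest : GNN Dm D') : GNN D D'

noncomputable def GNNLayer.apply {p Din Dout : ℕ} (l : GNNLayer Din Dout) (G : LGraph p)
    (emb : G.V → Fin Din → ℝ) : G.V → Fin Dout → ℝ :=
  fun v => l.com (Fin.append (emb v) (l.agg ((G.nbrFinset v).val.map emb)))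

/-- Running a GNN on an embedded graph. -/
noncomputable def GNN.run {p : ℕ} : {D D' : ℕ} → GNN D D' → (G : LGraph p) →
    (G.V → Fin D → ℝ) → (G.V → Fin D' → ℝ)
  | _, _, .last l, G, emb => l.apply G emb
  | _, _, .cons l rest, G, emb => rest.run G (l.apply G emb)

/-- The node classifier of a `(p,1)`-GNN (as a proposition: value `1` ↔ output `> 0`). -/
def GNN.clsP {p : ℕ} (A : GNN p 1) (G : LGraph p) (v : G.V) : Prop :=
  0 < A.run G G.embG v 0

/-- The node classifier of a `(p,1)`-GNN, as a boolean value. -/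
noncomputable def GNN.cls {p : ℕ} (A : GNN p 1) (G : LGraph p) (v : G.V) : Bool :=
  if A.clsP G v then true else false

/-! ### Hierarchical Ego GNNs -/

/-- A `(D,D')`-HE-GNN of nesting depth `d`. -/
inductive HEGNN : ℕ → ℕ → ℕ → Type
  | base {D D'} (A : GNN D D') : HEGNN 0 D D'
  | nest {d D D'' D'} (B : HEGNN d (D+1) D'') (C : GNN (D + D'') D') : HEGNN (d+1) D D'

noncomputable def HEGNN.run {p : ℕ} : {d D D' : ℕ} → HEGNN d D D' → (G : LGraph p) →
    (G.V → Fin D → ℝ) → (G.V → Fin D' → ℝ)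
  | _, _, _, .base A, G, emb => A.run G emb
  | _, _, _, .nest B C, G, emb =>
      C.run G (fun v => Fin.append (emb v)
        (B.run G (fun u => Fin.append (emb u) (fun _ => if u = v then (1:ℝ) else 0)) v))

def HEGNN.clsP {p d : ℕ} (A : HEGNN d p 1) (G : LGraph p) (v : G.V) : Prop :=
  0 < A.run G G.embG v 0

noncomputable def HEGNN.cls {p d : ℕ} (A : HEGNN d p 1) (G : LGraph p) (v : G.V) : Bool :=
  if A.clsP G v then true else false

/-! ### Hierarchical Ego Subgraph GNNs -/

/-- A `(D,D')`-HES-GNN of depth `d`; each nesting step carries its own radius `r`. -/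
inductive HESGNN : ℕ → ℕ → ℕ → Type
  | base {D D'} (A : GNN D D') : HESGNN 0 D D'
  | nest {d D D'' D'} (r : ℕ) (B : HESGNN d (D+1) D'') (C : GNN (D + D'') D') :
      HESGNN (d+1) D D'

noncomputable def HESGNN.run {p : ℕ} : {d D D' : ℕ} → HESGNN d D D' → (G : LGraph p) →
    (G.V → Fin D → ℝ) → (G.V → Fin D' → ℝ)
  | _, _, _, .base A, G, emb => A.run G emb
  | _, _, _, .nest r B C, G, emb =>
      C.run G (fun v => Fin.append (emb v)
        (B.run (G.ball v r)
          (fun u => Fin.append (emb u.1) (fun _ => if u.1 = v then (1:ℝ) else 0))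
          (G.ballCenter v r)))

/-- All subgraph restrictions in the HES-GNN use radius `r`. -/
def HESGNN.radIs : {d D D' : ℕ} → ℕ → HESGNN d D D' → Prop
  | _, _, _, _, .base _ => True
  | _, _, _, r, .nest r' B _ => r' = r ∧ B.radIs r

def HESGNN.clsP {p d : ℕ} (A : HESGNN d p 1) (G : LGraph p) (v : G.V) : Prop :=
  0 < A.run G G.embG v 0

noncomputable def HESGNN.cls {p d : ℕ} (A : HESGNN d p 1) (G : LGraph p) (v : G.V) : Bool :=
  if A.clsP G v then true else false
/-! ### Graded modal logic GML -/

inductive GML (p : ℕ) : Type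
  | prop (i : Fin p)
  | top
  | and (φ ψ : GML p)
  | not (φ : GML p)
  | dia (k : ℕ) (φ : GML p)

/-- Satisfaction of a GML formula at a node. -/
def GML.sat {p : ℕ} (G : LGraph p) : GML p → G.V → Prop
  | .prop i, v => G.lab v i
  | .top, _ => True
  | .and φ ψ, v => φ.sat G v ∧ ψ.sat G v
  | .not φ, v => ¬ φ.sat G v
  | .dia k φ, v => k ≤ Nat.card {u : G.V // G.adj v u ∧ φ.sat G u}

/-! ### Graded hybrid logic GML(↓) -/

inductive GMLd (p : ℕ) : Type
  | prop (i : Fin p)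
  | var (x : ℕ)
  | top
  | and (φ ψ : GMLd p)
  | not (φ : GMLd p)
  | dia (k : ℕ) (φ : GMLd p)
  | bind (x : ℕ) (φ : GMLd p)

/-- Satisfaction of a GML(↓) formula at a node, relative to an assignment of
variables to (marked) nodes; `↓x.φ` marks the current node with `x`. -/
def GMLd.sat {p : ℕ} (G : LGraph p) : GMLd p → (ℕ → Option G.V) → G.V → Prop
  | .prop i, _, v => G.lab v i
  | .var x, g, v => g x = some v
  | .top, _, _ => True
  | .and φ ψ, g, v => φ.sat G g v ∧ ψ.sat G g v
  | .not φ, g, v => ¬ φ.sat G g v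
  | .dia k φ, g, v => k ≤ Nat.card {u : G.V // G.adj v u ∧ φ.sat G g u}
  | .bind x φ, g, v => φ.sat G (Function.update g x (some v)) v

def GMLd.free {p : ℕ} : GMLd p → Set ℕ
  | .prop _ => ∅
  | .var x => {x}
  | .top => ∅
  | .and φ ψ => φ.free ∪ ψ.free
  | .not φ => φ.free
  | .dia _ φ => φ.free
  | .bind x φ => φ.free \ {x}

/-- A sentence has no free variables. -/
def GMLd.Sentence {p : ℕ} (φ : GMLd p) : Prop := φ.free = ∅

/-- The ↓-nesting-depth of a formula. -/
def GMLd.bindDepth {p : ℕ} : GMLd p → ℕ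
  | .prop _ => 0
  | .var _ => 0
  | .top => 0
  | .and φ ψ => max φ.bindDepth ψ.bindDepth
  | .not φ => φ.bindDepth
  | .dia _ φ => φ.bindDepth
  | .bind _ φ => φ.bindDepth + 1

/-- Satisfaction of a sentence (empty assignment). -/
def GMLd.satS {p : ℕ} (G : LGraph p) (φ : GMLd p) (v : G.V) : Prop :=
  φ.sat G (fun _ => none) v

/-! ### Graded hybrid subgraph logic: the fragment GML(↓_W) -/

inductive GMLW (p : ℕ) : Type
  | prop (i : Fin p)
  | var (x : ℕ)
  | top
  | and (φ ψ : GMLW p)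
  | not (φ : GMLW p)
  | dia (k : ℕ) (φ : GMLW p)
  /-- `↓_{W^r} x. φ`, i.e. `↓x. W^r φ`. -/
  | bindW (x : ℕ) (r : ℕ) (φ : GMLW p)

/-- Restrict an assignment along passage to an induced subgraph: markings of
nodes outside the subgraph disappear. -/
noncomputable def restrictAssign {p : ℕ} {G : LGraph p} (S : Set G.V)
    (g : ℕ → Option G.V) : ℕ → Option (G.induce S).V :=
  fun x => (g x).bind (fun w => if h : w ∈ S then some ⟨w, h⟩ else none)

/-- Satisfaction for the fragment GML(↓_W): `↓x.W^r φ` marks the current node `v`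
with `x` and evaluates `φ` in the subgraph `G_v^r`. -/
noncomputable def GMLW.sat {p : ℕ} : GMLW p → (G : LGraph p) → (ℕ → Option G.V) → G.V → Prop
  | .prop i, G, _, v => G.lab v i
  | .var x, _, g, v => g x = some v
  | .top, _, _, _ => True
  | .and φ ψ, G, g, v => φ.sat G g v ∧ ψ.sat G g v
  | .not φ, G, g, v => ¬ φ.sat G g v
  | .dia k φ, G, g, v => k ≤ Nat.card {u : G.V // G.adj v u ∧ φ.sat G g u}
  | .bindW x r φ, G, g, v =>
      φ.sat (G.ball v r) (restrictAssign _ (Function.update g x (some v))) (G.ballCenter v r)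

def GMLW.free {p : ℕ} : GMLW p → Set ℕ
  | .prop _ => ∅
  | .var x => {x}
  | .top => ∅
  | .and φ ψ => φ.free ∪ ψ.free
  | .not φ => φ.free
  | .dia _ φ => φ.free
  | .bindW x _ φ => φ.free \ {x}

def GMLW.Sentence {p : ℕ} (φ : GMLW p) : Prop := φ.free = ∅

/-- The nesting depth of `↓_{W^r}` operators. -/
def GMLW.bindDepth {p : ℕ} : GMLW p → ℕ
  | .prop _ => 0
  | .var _ => 0
  | .top => 0
  | .and φ ψ => max φ.bindDepth ψ.bindDepth
  | .not φ => φ.bindDepth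
  | .dia _ φ => φ.bindDepth
  | .bindW _ _ φ => φ.bindDepth + 1

/-- All `↓_{W}` operators in the formula use radius `r`. -/
def GMLW.radIs {p : ℕ} (r : ℕ) : GMLW p → Prop
  | .prop _ => True
  | .var _ => True
  | .top => True
  | .and φ ψ => φ.radIs r ∧ ψ.radIs r
  | .not φ => φ.radIs r
  | .dia _ φ => φ.radIs r
  | .bindW _ r' φ => r' = r ∧ φ.radIs r

noncomputable def GMLW.satS {p : ℕ} (G : LGraph p) (φ : GMLW p) (v : G.V) : Prop :=
  φ.sat G (fun _ => none) v
/-! ### Weisfeiler–Leman and Individualization-Refinement -/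

/-- An (ordered) space of colors together with a perfect (injective) hash
function whose domains are: node labelings (initial colors), pairs of a color
and a multiset of colors (refinement), and pairs of a color and a marking
(individualization). -/
structure HashSetup (p : ℕ) : Type 1 where
  C : Type
  linC : LinearOrder C
  hInit : (Fin p → Prop) → C
  hRefine : C → Multiset C → C
  hIndiv : C → Prop → C
  inj : Function.Injective
    (Sum.elim hInit (Sum.elim (fun y : C × Multiset C => hRefine y.1 y.2)
      (fun y : C × Prop => hIndiv y.1 y.2)))

/-- A coloring is discrete if all color classes are singletons. -/
def Discrete {V C : Type} (col : V → C) : Prop :=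
  ∀ u w, col u = col w → u = w

/-- One round of color refinement. -/
noncomputable def wlStep {p : ℕ} (H : HashSetup p) (G : LGraph p)
    (col : G.V → H.C) : G.V → H.C :=
  fun v => H.hRefine (col v) ((G.nbrFinset v).val.map col)

/-- `wlIter H G d col` = `WL(G, col, d)`. -/
noncomputable def wlIter {p : ℕ} (H : HashSetup p) (G : LGraph p) :
    ℕ → (G.V → H.C) → (G.V → H.C)
  | 0, col => col
  | (d+1), col => wlStep H G (wlIter H G d col)

/-- The initial coloring `col_G`. -/
noncomputable def initCol {p : ℕ} (H : HashSetup p) (G : LGraph p) : G.V → H.C :=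
  fun v => H.hInit (G.lab v)

/-- Rose trees labeled by multisets of colors.  (Children are kept in a list;
the isomorphism relation below disregards their order.) -/
inductive CTree (C : Type) : Type
  | node (label : Multiset C) (children : List (CTree C))

/-- Isomorphism of trees whose nodes are labeled by multisets of colors. -/
inductive CTree.Iso {C : Type} : CTree C → CTree C → Prop
  | node {l : Multiset C} {cs1 cs2 : List (CTree C)}
      (e : Fin cs1.length ≃ Fin cs2.length)
      (h : ∀ i : Fin cs1.length, CTree.Iso (cs1.get i) (cs2.get (e i))) :
      CTree.Iso (.node l cs1) (.node l cs2)

/-- The multiset of all colors of a coloring. -/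
noncomputable def colMultiset {p : ℕ} (H : HashSetup p) (G : LGraph p)
    (col : G.V → H.C) : Multiset H.C :=
  Finset.univ.val.map col

/-- `WLIR H G d col` = the IR tree `WL-IR(G, col, d)` with at most `d`
individualization steps, with colorings recorded by their color multisets. -/
noncomputable def WLIR {p : ℕ} (H : HashSetup p) (G : LGraph p) :
    ℕ → (G.V → H.C) → CTree H.C
  | 0, col => .node (colMultiset H G (wlIter H G (Fintype.card G.V) col)) []
  | (d+1), col =>
    let col' := wlIter H G (Fintype.card G.V) col
    if hdisc : Discrete col' then .node (colMultiset H G col') []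
    else
      letI := H.linC
      let bigs : Finset H.C := (Finset.univ.image col').filter
        (fun c => 1 < (Finset.univ.filter (fun v => col' v = c)).card)
      have hne : bigs.Nonempty := by
        simp only [Discrete, not_forall] at hdisc
        obtain ⟨u, w, hc, hne'⟩ := hdisc
        refine ⟨col' u, Finset.mem_filter.mpr
          ⟨Finset.mem_image_of_mem _ (Finset.mem_univ u), ?_⟩⟩
        exact Finset.one_lt_card.mpr
          ⟨u, by simp, w, by simp [hc.symm], hne'⟩
      let c := bigs.min' hne
      .node (colMultiset H G col')
        (((Finset.univ.filter (fun v => col' v = c)).toList).map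
          (fun vi => WLIR H G d (fun v => H.hIndiv (col' v) (v = vi))))

/-- `G ≡_{WL-IR-d} G'` : the IR trees with `d` individualization steps are
isomorphic. -/
noncomputable def WLIRequiv {p : ℕ} (H : HashSetup p) (G G' : LGraph p) (d : ℕ) : Prop :=
  CTree.Iso (WLIR H G d (initCol H G)) (WLIR H G' d (initCol H G'))

/-- Isomorphism of labeled graphs. -/
def LGraph.Iso {p : ℕ} (G G' : LGraph p) : Prop :=
  ∃ f : G.V ≃ G'.V, (∀ u v, G.adj u v ↔ G'.adj (f u) (f v)) ∧
    ∀ v i, G.lab v i ↔ G'.lab (f v) i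
/-! ### The k-dimensional Weisfeiler–Leman test -/

/-- The type of `k`-WL colors after `i` refinement rounds (shared between all
graphs, so colors of different graphs are directly comparable). -/
def KColor (p k : ℕ) : ℕ → Type
  | 0 => ((Fin k → Fin k → Prop) × (Fin k → Fin k → Prop) × (Fin k → Fin p → Prop))
  | (i+1) => KColor p k i × (Fin k → Multiset (KColor p k i))

/-- The `k`-WL coloring of `k`-tuples after `i` rounds: the initial color is the
isomorphism type of the tuple (equalities, adjacencies, labels); each round
refines by, for each position, the multiset of colors of all one-point
modifications of the tuple. -/
noncomputable def kwl (p k : ℕ) (G : LGraph p) :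
    (i : ℕ) → (Fin k → G.V) → KColor p k i
  | 0, t => (fun i j => t i = t j, fun i j => G.adj (t i) (t j), fun i a => G.lab (t i) a)
  | (i+1), t => (kwl p k G i t,
      fun j => Finset.univ.val.map (fun w => kwl p k G i (Function.update t j w)))

/-- `(G,v)` and `(G',v')` are *not* distinguished by the `k`-dimensional WL test:
the colors of the constant tuples `(v,…,v)` and `(v',…,v')` agree at every round
(equivalently, the stable colors agree). -/
noncomputable def kwlEquiv (p k : ℕ) (G : LGraph p) (v : G.V) (G' : LGraph p) (v' : G'.V) : Prop :=
  ∀ i : ℕ, kwl p k G i (fun _ => v) = kwl p k G' i (fun _ => v')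
/-! ### Rooted graphs, homomorphism counts, Sum/ReLU-FFNN GNNs, degree bounds -/

namespace LGraph
variable {p : ℕ}

/-- `(F,u)` is a rooted graph: every node is reachable from `u`. -/
def Rooted (F : LGraph p) (u : F.V) : Prop := ∀ w, ∃ r, F.within u r w

/-- Every node of `G` has degree at most `N`. -/
def degLe (G : LGraph p) (N : ℕ) : Prop := ∀ v, Nat.card {u : G.V // G.adj v u} ≤ N

end LGraph

/-- The number of homomorphisms from the pointed graph `(F,u)` to `(G,v)`:
maps sending the root to `v`, preserving edges, and preserving labels. -/
noncomputable def homCount {p : ℕ} (F G : LGraph p) (u : F.V) (v : G.V) : ℕ :=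
  Nat.card {h : F.V → G.V //
    h u = v ∧ (∀ ⦃w w'⦄, F.adj w w' → G.adj (h w) (h w')) ∧
    ∀ w i, F.lab w i → G.lab (h w) i}

/-- Pointwise sum aggregation. -/
def sumAgg (D : ℕ) : Multiset (Fin D → ℝ) → (Fin D → ℝ) :=
  fun M i => (M.map (fun x => x i)).sum

/-- ReLU feed-forward neural networks: compositions of affine maps and
coordinatewise ReLU. -/
inductive IsReLUFFNN : {n m : ℕ} → ((Fin n → ℝ) → (Fin m → ℝ)) → Prop
  | affine {n m : ℕ} (W : Matrix (Fin m) (Fin n) ℝ) (b : Fin m → ℝ) :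
      IsReLUFFNN (fun x => W.mulVec x + b)
  | relu {n : ℕ} : IsReLUFFNN (fun (x : Fin n → ℝ) i => max 0 (x i))
  | comp {n m k : ℕ} {f : (Fin n → ℝ) → (Fin m → ℝ)} {g : (Fin m → ℝ) → (Fin k → ℝ)} :
      IsReLUFFNN f → IsReLUFFNN g → IsReLUFFNN (fun x => g (f x))

/-- A layer uses Sum aggregation and a ReLU-FFNN combination function. -/
def GNNLayer.SumReLU {Din Dout : ℕ} (l : GNNLayer Din Dout) : Prop :=
  l.agg = sumAgg Din ∧ IsReLUFFNN l.com

def GNN.SumReLU : {D D' : ℕ} → GNN D D' → Prop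
  | _, _, .last l => l.SumReLU
  | _, _, .cons l rest => l.SumReLU ∧ rest.SumReLU

def HEGNN.SumReLU : {d D D' : ℕ} → HEGNN d D D' → Prop
  | _, _, _, .base A => A.SumReLU
  | _, _, _, .nest B C => B.SumReLU ∧ C.SumReLU
/-! ### Cycles, acyclicity, ego-rank, tree-width -/

namespace LGraph
variable {p : ℕ}

/-- There is a cycle (length ≥ 3, distinct nodes, consecutive nodes adjacent,
cyclically) all of whose nodes lie in `S`. -/
def CycleIn (G : LGraph p) (S : Set G.V) : Prop :=
  ∃ (n : ℕ) (c : Fin n → G.V), 3 ≤ n ∧ Function.Injective c ∧ (∀ i, c i ∈ S) ∧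
    ∀ i : Fin n, G.adj (c i) (c ⟨(i.val + 1) % n, Nat.mod_lt _ i.pos⟩)

/-- `G` is acyclic. -/
def Acyclic (G : LGraph p) : Prop := ¬ G.CycleIn Set.univ

/-- `(G,v)` is c-acyclic: every cycle of `G` passes through `v`. -/
def CAcyclic (G : LGraph p) (v : G.V) : Prop :=
  ∀ (n : ℕ) (c : Fin n → G.V), 3 ≤ n → Function.Injective c →
    (∀ i : Fin n, G.adj (c i) (c ⟨(i.val + 1) % n, Nat.mod_lt _ i.pos⟩)) →
    ∃ i, c i = v

/-- Reachability inside a set `S` (paths are required to stay in `S`). -/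
inductive ReachIn (G : LGraph p) (S : Set G.V) : G.V → G.V → Prop
  | refl {a} (ha : a ∈ S) : ReachIn G S a a
  | tail {a b c} : ReachIn G S a b → G.adj b c → c ∈ S → ReachIn G S a c

/-- The set `S` induces a connected subgraph. -/
def ConnectedIn (G : LGraph p) (S : Set G.V) : Prop :=
  ∀ a ∈ S, ∀ b ∈ S, G.ReachIn S a b

/-- `G` is connected. -/
def Connected (G : LGraph p) : Prop := ∀ a b : G.V, ∃ r, G.within a r b

end LGraph

/-! #### Ego-rank -/

/-- Transitive closure of a partial map `dep` (so `DepCl dep w x` means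
`x ∈ deps(w) = {dep(w), dep(dep(w)), …} \ {⊥}`). -/
inductive DepCl {V : Type} (dep : V → Option V) : V → V → Prop
  | base {w x} : dep w = some x → DepCl dep w x
  | step {w x y} : DepCl dep w x → dep x = some y → DepCl dep w y

/-- `deps(w)` as a set. -/
def deps {V : Type} (dep : V → Option V) (w : V) : Set V := {x | DepCl dep w x}

/-- `dep` is a dependency function for the rooted graph `(G,v)`. -/
def IsDepFun {p : ℕ} (G : LGraph p) (v : G.V) (dep : G.V → Option G.V) : Prop :=
  dep v = none ∧
  (∀ {w u}, G.adj w u → dep w = dep u ∨ w ∈ deps dep u ∨ u ∈ deps dep w) ∧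
  (∀ o : Option G.V, ¬ G.CycleIn {w | dep w = o})

/-- The node rank of a node: `|deps(w)|`. -/
noncomputable def nodeRank {V : Type} (dep : V → Option V) (w : V) : ℕ :=
  Nat.card {x // DepCl dep w x}

/-- Ego-rank: the smallest achievable maximum node rank over all dependency
functions. -/
noncomputable def egoRank {p : ℕ} (G : LGraph p) (v : G.V) : ℕ :=
  sInf {k | ∃ dep, IsDepFun G v dep ∧ ∀ w, nodeRank dep w ≤ k}

/-! #### Tree decompositions and tree-width -/

/-- A tree decomposition of `G`: a (connected, acyclic) tree `T` with bags
covering all nodes and edges, such that each node's bags form a connected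
subtree. -/
structure TreeDecomp (p : ℕ) (G : LGraph p) : Type 1 where
  T : LGraph 0
  conn : T.Connected
  acyc : T.Acyclic
  bag : T.V → Set G.V
  cover_v : ∀ u : G.V, ∃ t, u ∈ bag t
  cover_e : ∀ {u w : G.V}, G.adj u w → ∃ t, u ∈ bag t ∧ w ∈ bag t
  subtree : ∀ u : G.V, T.ConnectedIn {t | u ∈ bag t}

/-- Tree-width: minimum over tree decompositions of (maximum bag size − 1). -/
noncomputable def treewidth {p : ℕ} (G : LGraph p) : ℕ :=
  sInf {w | ∃ D : TreeDecomp p G, ∀ t, Nat.card (D.bag t) ≤ w + 1}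
/-! ### Special graphs: cycles, disjoint unions, grids (all labels empty) -/

/-- The cycle graph `C_n` (for `n ≥ 3`), with empty node labels. -/
def cycleGraph (p n : ℕ) : LGraph p where
  V := Fin n
  fintypeV := inferInstance
  decEqV := inferInstance
  adj i j := i ≠ j ∧ ((i.val + 1) % n = j.val ∨ (j.val + 1) % n = i.val)
  symm h := ⟨h.1.symm, h.2.symm⟩
  irrefl _ h := h.1 rfl
  lab _ _ := False

/-- Disjoint union of two graphs. -/
def LGraph.disjUnion {p : ℕ} (G1 G2 : LGraph p) : LGraph p where
  V := G1.V ⊕ G2.V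
  fintypeV := inferInstance
  decEqV := inferInstance
  adj a b :=
    match a, b with
    | .inl x, .inl y => G1.adj x y
    | .inr x, .inr y => G2.adj x y
    | _, _ => False
  symm {a b} h := by
    cases a <;> cases b <;> simp_all <;> first | exact G1.symm h | exact G2.symm h
  irrefl a h := by
    cases a
    · exact G1.irrefl _ h
    · exact G2.irrefl _ h
  lab a i :=
    match a with
    | .inl x => G1.lab x i
    | .inr x => G2.lab x i

/-- The `n × 2` grid graph, with empty node labels. -/
def gridGraph (p n : ℕ) : LGraph p where
  V := Fin n × Fin 2
  fintypeV := inferInstance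
  decEqV := inferInstance
  adj a b := (a.2 = b.2 ∧ (a.1.val + 1 = b.1.val ∨ b.1.val + 1 = a.1.val)) ∨
    (a.1 = b.1 ∧ a.2 ≠ b.2)
  symm h := by
    rcases h with ⟨h1, h2⟩ | ⟨h1, h2⟩
    · exact Or.inl ⟨h1.symm, h2.symm⟩
    · exact Or.inr ⟨h1.symm, h2.symm⟩
  irrefl a h := by
    rcases h with ⟨_, h2 | h2⟩ | ⟨_, h2⟩
    · omega
    · omega
    · exact h2 rfl
  lab _ _ := False
/-! ### The witness graphs of Rattan–Seppelt: a central 4-cycle with attached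
triangles and 6-cycles. -/

/-- Vertex type: 4 square nodes, 4 triangles (3 nodes each), 4 hexagons
(6 nodes each). -/
abbrev RSV : Type := Fin 4 ⊕ (Fin 4 × Fin 3) ⊕ (Fin 4 × Fin 6)

/-- Adjacency, parameterized by the owner (square corner) of each triangle and
of each hexagon: the square is a 4-cycle; each triangle/hexagon is complete to
its owner; triangles are 3-cycles, hexagons are 6-cycles. -/
def rsAdj (tO hO : Fin 4 → Fin 4) : RSV → RSV → Prop
  | .inl a, .inl b => a ≠ b ∧ ((a.val + 1) % 4 = b.val ∨ (b.val + 1) % 4 = a.val)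
  | .inl a, .inr (.inl (t, _)) => a = tO t
  | .inr (.inl (t, _)), .inl a => a = tO t
  | .inl a, .inr (.inr (s, _)) => a = hO s
  | .inr (.inr (s, _)), .inl a => a = hO s
  | .inr (.inl (t, i)), .inr (.inl (t', i')) => t = t' ∧ i ≠ i'
  | .inr (.inr (s, j)), .inr (.inr (s', j')) =>
      s = s' ∧ ((j.val + 1) % 6 = j'.val ∨ (j'.val + 1) % 6 = j.val)
  | _, _ => False

def rsGraph (p : ℕ) (tO hO : Fin 4 → Fin 4) : LGraph p where
  V := RSV
  fintypeV := inferInstance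
  decEqV := inferInstance
  adj := rsAdj tO hO
  symm {u v} h := by
    rcases u with a | ⟨t, i⟩ | ⟨s, j⟩ <;> rcases v with b | ⟨t', i'⟩ | ⟨s', j'⟩ <;>
      simp only [rsAdj] at h ⊢ <;> tauto
  irrefl u h := by
    rcases u with a | ⟨t, i⟩ | ⟨s, j⟩ <;> simp only [rsAdj] at h <;> omega
  lab _ _ := False

/-- `G`: triangles attached to `u₁` (index 0) and `u₄` (index 3), hexagons to
`u₂` (index 1) and `u₃` (index 2). -/
def rsG (p : ℕ) : LGraph p :=
  rsGraph p (fun t => if t.val < 2 then 0 else 3) (fun s => if s.val < 2 then 1 else 2)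

/-- `G'`: triangles attached to the opposite corners `u₁` (index 0) and `u₃`
(index 2), hexagons to `u₂` (index 1) and `u₄` (index 3). -/
def rsG' (p : ℕ) : LGraph p :=
  rsGraph p (fun t => if t.val < 2 then 0 else 2) (fun s => if s.val < 2 then 1 else 3)
/-! ### Graph-level separation by node classifiers -/

/-- `G ≡_{GNN} G'`: for every GNN node classifier, the multisets of classifier
values over all nodes coincide. -/
noncomputable def gnnGraphEquiv (p : ℕ) (G G' : LGraph p) : Prop :=
  ∀ A : GNN p 1, Finset.univ.val.map (A.cls G) = Finset.univ.val.map (A.cls G')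

/-- `G ≡_{HE-GNN-(d)} G'`: for every HE-GNN node classifier of nesting depth
`d`, the multisets of classifier values over all nodes coincide. -/
noncomputable def hegnnGraphEquiv (p d : ℕ) (G G' : LGraph p) : Prop :=
  ∀ A : HEGNN d p 1, Finset.univ.val.map (A.cls G) = Finset.univ.val.map (A.cls G')

/-- The eccentricity of `u` in `G`: the maximal distance from `u` to any node. -/
noncomputable def LGraph.eccFrom {p : ℕ} (G : LGraph p) (u : G.V) : ℕ :=
  Finset.univ.sup (fun w => sInf {r | G.within u r w})

/-! ### Auxiliary development for the proof of Statement 2 -/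

noncomputable section HesAux

namespace HesAux

/-- Real-valued indicator of a proposition. -/
def ind (h : Prop) : ℝ := if h then 1 else 0

lemma ind_eq_one_iff {h : Prop} : ind h = 1 ↔ h := by
  unfold ind; split <;> simp_all

lemma ind_pos_iff {h : Prop} : 0 < ind h ↔ h := by
  unfold ind; split <;> simp_all

/-- Counting neighbours satisfying `Q` via multiset filtering. -/
lemma card_filter_nbr {p : ℕ} (G : LGraph p) (v : G.V) (Q : G.V → Prop) :
    Nat.card {u : G.V // G.adj v u ∧ Q u} =
      Multiset.card ((G.nbrFinset v).val.filter Q) := by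
  classical
  rw [Nat.card_eq_fintype_card, Fintype.card_subtype]
  unfold LGraph.nbrFinset
  rw [← Finset.filter_val, Finset.filter_filter]
  rfl

/-- Semantics of `GML q` formulas on a graph equipped with an abstract
interpretation `P` of the `q` atoms. -/
def msat {p q : ℕ} (H : LGraph p) (P : H.V → Fin q → Prop) : GML q → H.V → Prop
  | .prop i, v => P v i
  | .top, _ => True
  | .and φ ψ, v => msat H P φ v ∧ msat H P ψ v
  | .not φ, v => ¬ msat H P φ v
  | .dia k φ, v => k ≤ Nat.card {u : H.V // H.adj v u ∧ msat H P φ u}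

noncomputable instance {q : ℕ} : DecidableEq (GML q) := Classical.decEq _

/-- The list of subformulas of a `GML` formula. -/
def subf {q : ℕ} : GML q → List (GML q)
  | .prop i => [.prop i]
  | .top => [.top]
  | .and φ ψ => .and φ ψ :: (subf φ ++ subf ψ)
  | .not φ => .not φ :: subf φ
  | .dia k φ => .dia k φ :: subf φ

lemma self_mem_subf {q : ℕ} (θ : GML q) : θ ∈ subf θ := by
  cases θ <;> simp [subf]

/-- A list of formulas closed under immediate subformulas. -/
def closes {q : ℕ} (SF : List (GML q)) : Prop :=
  ∀ θ ∈ SF, match θ with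
  | .and φ ψ => φ ∈ SF ∧ ψ ∈ SF
  | .not φ => φ ∈ SF
  | .dia _ φ => φ ∈ SF
  | _ => True

lemma subf_and_mem {q : ℕ} {φ ψ : GML q} : ∀ {ρ : GML q},
    GML.and φ ψ ∈ subf ρ → φ ∈ subf ρ ∧ ψ ∈ subf ρ := by
  intro ρ
  induction ρ with
  | prop i => intro h; simp [subf] at h
  | top => intro h; simp [subf] at h
  | and α β ihα ihβ =>
      intro h
      simp only [subf, List.mem_cons, List.mem_append] at h
      rcases h with h | h | h
      · cases h
        constructor <;> simp [subf, List.mem_cons, List.mem_append, self_mem_subf]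
      · have := ihα h
        constructor <;> simp [subf, List.mem_cons, List.mem_append, this.1, this.2]
      · have := ihβ h
        constructor <;> simp [subf, List.mem_cons, List.mem_append, this.1, this.2]
  | not α ihα =>
      intro h
      simp only [subf, List.mem_cons] at h
      rcases h with h | h
      · cases h
      · have := ihα h
        constructor <;> simp [subf, this.1, this.2]
  | dia k α ihα =>
      intro h
      simp only [subf, List.mem_cons] at h
      rcases h with h | h
      · cases h
      · have := ihα h
        constructor <;> simp [subf, this.1, this.2]

lemma subf_not_mem {q : ℕ} {φ : GML q} : ∀ {ρ : GML q},
    GML.not φ ∈ subf ρ → φ ∈ subf ρ := by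
  intro ρ
  induction ρ with
  | prop i => intro h; simp [subf] at h
  | top => intro h; simp [subf] at h
  | and α β ihα ihβ =>
      intro h
      simp only [subf, List.mem_cons, List.mem_append] at h
      rcases h with h | h | h
      · cases h
      · simp [subf, List.mem_cons, List.mem_append, ihα h]
      · simp [subf, List.mem_cons, List.mem_append, ihβ h]
  | not α ihα =>
      intro h
      simp only [subf, List.mem_cons] at h
      rcases h with h | h
      · cases h; simp [subf, self_mem_subf]
      · simp [subf, ihα h]
  | dia k α ihα =>
      intro h
      simp only [subf, List.mem_cons] at h
      rcases h with h | h
      · cases h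
      · simp [subf, ihα h]

lemma subf_dia_mem {q : ℕ} {k : ℕ} {φ : GML q} : ∀ {ρ : GML q},
    GML.dia k φ ∈ subf ρ → φ ∈ subf ρ := by
  intro ρ
  induction ρ with
  | prop i => intro h; simp [subf] at h
  | top => intro h; simp [subf] at h
  | and α β ihα ihβ =>
      intro h
      simp only [subf, List.mem_cons, List.mem_append] at h
      rcases h with h | h | h
      · cases h
      · simp [subf, List.mem_cons, List.mem_append, ihα h]
      · simp [subf, List.mem_cons, List.mem_append, ihβ h]
  | not α ihα =>
      intro h
      simp only [subf, List.mem_cons] at h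
      rcases h with h | h
      · cases h
      · simp [subf, ihα h]
  | dia k' α ihα =>
      intro h
      simp only [subf, List.mem_cons] at h
      rcases h with h | h
      · cases h; simp [subf, self_mem_subf]
      · simp [subf, ihα h]

lemma closes_flatMap {q : ℕ} (Θ : List (GML q)) : closes (Θ.flatMap subf) := by
  intro θ hθ
  rw [List.mem_flatMap] at hθ
  obtain ⟨ρ, hρ, hθρ⟩ := hθ
  cases θ with
  | and φ ψ =>
      obtain ⟨a, b⟩ := subf_and_mem hθρ
      exact ⟨List.mem_flatMap.mpr ⟨ρ, hρ, a⟩, List.mem_flatMap.mpr ⟨ρ, hρ, b⟩⟩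
  | not φ => exact List.mem_flatMap.mpr ⟨ρ, hρ, subf_not_mem hθρ⟩
  | dia k φ => exact List.mem_flatMap.mpr ⟨ρ, hρ, subf_dia_mem hθρ⟩
  | prop i => trivial
  | top => trivial

/-- Height of a formula. -/
def hgt {q : ℕ} : GML q → ℕ
  | .prop _ => 0
  | .top => 0
  | .and φ ψ => max (hgt φ) (hgt ψ) + 1
  | .not φ => hgt φ + 1
  | .dia _ φ => hgt φ + 1

lemma le_foldr_max (l : List ℕ) : ∀ x ∈ l, x ≤ l.foldr max 0 := by
  induction l with
  | nil => intro x hx; cases hx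
  | cons a t ih =>
      intro x hx
      rcases List.mem_cons.mp hx with h | h
      · subst h; exact le_max_left _ _
      · exact le_trans (ih x h) (le_max_right _ _)

/-- Safe access into a finite real vector. -/
def nth {M : ℕ} (z : Fin M → ℝ) (i : ℕ) : ℝ := if h : i < M then z ⟨i, h⟩ else 0

lemma append_apply_lt {m n : ℕ} (u : Fin m → ℝ) (w : Fin n → ℝ) (i : ℕ)
    (hi : i < m) (h2 : i < m + n) : Fin.append u w ⟨i, h2⟩ = u ⟨i, hi⟩ := by
  have : (⟨i, h2⟩ : Fin (m + n)) = Fin.castAdd n ⟨i, hi⟩ := rfl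
  rw [this, Fin.append_left]

lemma append_apply_ge {m n : ℕ} (u : Fin m → ℝ) (w : Fin n → ℝ) (i : ℕ)
    (h1 : m ≤ i) (h2 : i < m + n) : Fin.append u w ⟨i, h2⟩ = w ⟨i - m, by omega⟩ := by
  have : (⟨i, h2⟩ : Fin (m + n)) = Fin.natAdd m ⟨i - m, by omega⟩ := by
    apply Fin.ext; simp [Fin.natAdd]; omega
  rw [this, Fin.append_right]

/-- The update rule for one formula slot. -/
def slotFun (q : ℕ) (SF : List (GML q))
    (z : Fin ((q + SF.length) + (q + SF.length)) → ℝ) : GML q → ℝ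
  | .prop i => z ⟨(i : ℕ), by have := i.isLt; omega⟩
  | .top => 1
  | .and φ ψ =>
      if nth z (q + SF.idxOf φ) = 1 ∧ nth z (q + SF.idxOf ψ) = 1 then 1 else 0
  | .not φ => if nth z (q + SF.idxOf φ) = 1 then 0 else 1
  | .dia k φ =>
      if (k : ℝ) ≤ nth z ((q + SF.length) + (q + SF.idxOf φ)) then 1 else 0

/-- The recurrent layer computing one step of formula evaluation. -/
def updLayer (q : ℕ) (SF : List (GML q)) :
    GNNLayer (q + SF.length) (q + SF.length) where
  agg := fun M i => ((M.filter (fun x => x i = 1)).card : ℝ)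
  com := fun z j =>
    if h : (j : ℕ) < q then z ⟨(j : ℕ), by omega⟩
    else slotFun q SF z (SF.get ⟨(j : ℕ) - q, by have := j.isLt; omega⟩)

/-- Input layer: copy the `q` atom coordinates, padding with zeros. -/
def inLayer (q m : ℕ) : GNNLayer q (q + m) where
  agg := fun _ _ => 0
  com := fun z j => if h : (j : ℕ) < q then z ⟨(j : ℕ), by omega⟩ else 0

/-- Output layer: project the slots of the formulas in `Θ`. -/
def outLayer (q : ℕ) (SF : List (GML q)) (m : ℕ) (Θ : Fin m → GML q) :
    GNNLayer (q + SF.length) m where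
  agg := fun _ _ => 0
  com := fun z j => nth z (q + SF.idxOf (Θ j))

/-- Chain `k` copies of a layer in front of a network. -/
def chain {D D' : ℕ} (l : GNNLayer D D) : ℕ → GNN D D' → GNN D D'
  | 0, N => N
  | k + 1, N => .cons l (chain l k N)

lemma chain_run {p D D' : ℕ} (l : GNNLayer D D) (k : ℕ) (N : GNN D D')
    (H : LGraph p) (e : H.V → Fin D → ℝ) :
    (chain l k N).run H e = N.run H ((fun f => l.apply H f)^[k] e) := by
  induction k generalizing e with
  | zero => rfl
  | succ k ih =>
      show (chain l k N).run H (l.apply H e) = _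
      rw [ih, ← Function.iterate_succ_apply]

section Invariant

variable {p' q : ℕ} (H : LGraph p') (P : H.V → Fin q → Prop) (SF : List (GML q))

lemma nth_eq {M : ℕ} (z : Fin M → ℝ) (i : ℕ) (h : i < M) : nth z i = z ⟨i, h⟩ :=
  dif_pos h

/-- The embedding after the input layer and `t` recurrent layers. -/
def evalEmb (t : ℕ) : H.V → Fin (q + SF.length) → ℝ :=
  (fun f => (updLayer q SF).apply H f)^[t]
    ((inLayer q SF.length).apply H (fun u i => ind (P u i)))

lemma evalEmb_atom (t : ℕ) (v : H.V) (i : ℕ) (hi : i < q) :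
    evalEmb H P SF t v ⟨i, by omega⟩ = ind (P v ⟨i, hi⟩) := by
  induction t with
  | zero =>
      show (inLayer q SF.length).apply H _ v ⟨i, _⟩ = _
      unfold GNNLayer.apply inLayer
      simp only [dif_pos hi]
      rw [append_apply_lt _ _ i hi (by omega)]
  | succ t ih =>
      rw [show evalEmb H P SF (t+1) = (updLayer q SF).apply H (evalEmb H P SF t) from
        Function.iterate_succ_apply' _ _ _]
      unfold GNNLayer.apply updLayer
      simp only [dif_pos hi]
      rw [append_apply_lt _ _ i (by omega) (by omega)]
      exact ih

set_option maxHeartbeats 1000000 in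
lemma evalEmb_slot (hSF : closes SF) (t : ℕ) (jp : ℕ) (hj : jp < SF.length)
    (hh : hgt (SF.get ⟨jp, hj⟩) < t) (v : H.V) :
    evalEmb H P SF t v ⟨q + jp, by omega⟩ =
      ind (msat H P (SF.get ⟨jp, hj⟩) v) := by
  induction t generalizing jp v with
  | zero => omega
  | succ t ih =>
      rw [show evalEmb H P SF (t+1) = (updLayer q SF).apply H (evalEmb H P SF t) from
        Function.iterate_succ_apply' _ _ _]
      unfold GNNLayer.apply updLayer
      simp only [dif_neg (by omega : ¬ q + jp < q)]
      have hidx : (⟨q + jp - q, by omega⟩ : Fin SF.length) = ⟨jp, hj⟩ :=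
        Fin.ext (by simp)
      rw [hidx]
      have hmem : SF.get ⟨jp, hj⟩ ∈ SF := List.get_mem SF ⟨jp, hj⟩
      set agv : Fin (q + SF.length) → ℝ :=
        fun i => ((Multiset.filter (fun x => x i = 1)
          (Multiset.map (evalEmb H P SF t) (H.nbrFinset v).val)).card : ℝ) with hagv
      have slot_val : ∀ (φ : GML q), φ ∈ SF → hgt φ < t →
          nth (Fin.append (evalEmb H P SF t v) agv) (q + SF.idxOf φ)
            = ind (msat H P φ v) := by
        intro φ hφ hhφ
        have hlt : SF.idxOf φ < SF.length := List.idxOf_lt_length_iff.mpr hφ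
        rw [nth_eq _ _ (by omega : q + SF.idxOf φ < (q + SF.length) + (q + SF.length))]
        rw [append_apply_lt _ _ _ (by omega : q + SF.idxOf φ < q + SF.length) (by omega)]
        have hget : SF.get ⟨SF.idxOf φ, hlt⟩ = φ := by
          simp [List.get_eq_getElem, List.getElem_idxOf]
        rw [ih (SF.idxOf φ) hlt (by rw [hget]; exact hhφ) v, hget]
      have agg_val : ∀ (φ : GML q) (hφ : φ ∈ SF), hgt φ < t →
          agv ⟨q + SF.idxOf φ, by
            have := List.idxOf_lt_length_iff.mpr hφ; omega⟩
            = ((Nat.card {u : H.V // H.adj v u ∧ msat H P φ u} : ℕ) : ℝ) := by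
        intro φ hφ hhφ
        have hlt : SF.idxOf φ < SF.length := List.idxOf_lt_length_iff.mpr hφ
        show (((((H.nbrFinset v).val.map (evalEmb H P SF t)).filter
          (fun x => x ⟨q + SF.idxOf φ, by omega⟩ = 1)).card : ℕ) : ℝ) = _
        congr 1
        rw [Multiset.filter_map, Multiset.card_map, card_filter_nbr]
        congr 1
        apply Multiset.filter_congr
        intro u _
        show evalEmb H P SF t u ⟨q + SF.idxOf φ, _⟩ = 1 ↔ msat H P φ u
        have hget2 : SF.get ⟨SF.idxOf φ, hlt⟩ = φ := by
          simp [List.get_eq_getElem, List.getElem_idxOf]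
        rw [ih (SF.idxOf φ) hlt (by rw [hget2]; exact hhφ) u, hget2]
        exact ind_eq_one_iff
      cases hget : SF.get ⟨jp, hj⟩ with
      | prop i =>
          simp only [slotFun]
          rw [append_apply_lt _ _ _ (by have := i.isLt; omega : (i:ℕ) < q + SF.length)
            (by have := i.isLt; omega)]
          rw [evalEmb_atom H P SF t v i i.isLt]
          simp [msat]
      | top => simp [slotFun, msat, ind]
      | and φ ψ =>
          simp only [slotFun]
          rw [hget] at hmem hh
          obtain ⟨hφ, hψ⟩ := hSF _ hmem
          rw [slot_val φ hφ (by simp [hgt] at hh; omega),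
              slot_val ψ hψ (by simp [hgt] at hh; omega)]
          simp only [ind_eq_one_iff]
          simp [msat, ind]
          by_cases hm : msat H P φ v ∧ msat H P ψ v <;> simp [hm]
      | not φ =>
          simp only [slotFun]
          rw [hget] at hmem hh
          have hφ := hSF _ hmem
          rw [slot_val φ hφ (by simp [hgt] at hh; omega)]
          simp only [ind_eq_one_iff]
          simp [msat, ind]
          by_cases hm : msat H P φ v <;> simp [hm]
      | dia k φ =>
          simp only [slotFun]
          rw [hget] at hmem hh
          have hφ := hSF _ hmem
          have hlt : SF.idxOf φ < SF.length := List.idxOf_lt_length_iff.mpr hφ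
          rw [nth_eq _ _ (by omega : (q + SF.length) + (q + SF.idxOf φ) <
            (q + SF.length) + (q + SF.length))]
          rw [append_apply_ge _ _ _ (by omega) (by omega)]
          rw [show (⟨((q + SF.length) + (q + SF.idxOf φ)) - (q + SF.length), by omega⟩ :
            Fin (q + SF.length)) = ⟨q + SF.idxOf φ, by omega⟩ from by
              rw [Fin.mk.injEq]; omega]
          rw [agg_val φ hφ (by simp [hgt] at hh; omega)]
          simp [msat, ind, Nat.cast_le]

end Invariant

/-- A GNN computing the truth values of a family of `GML q` formulas, for every
graph and every interpretation of the `q` atoms. -/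
lemma gnn_of_gml {q m : ℕ} (Θ : Fin m → GML q) :
    ∃ N : GNN q m, ∀ {p' : ℕ} (H : LGraph p') (P : H.V → Fin q → Prop)
      (v : H.V) (j : Fin m),
      N.run H (fun u i => ind (P u i)) v j = ind (msat H P (Θ j) v) := by
  classical
  set SF := (List.ofFn Θ).flatMap subf with hSFdef
  have hcl : closes SF := closes_flatMap _
  set K := (SF.map hgt).foldr max 0 + 1 with hK
  refine ⟨.cons (inLayer q SF.length) (chain (updLayer q SF) K (.last (outLayer q SF m Θ))), ?_⟩
  intro p' H P v j
  show (chain (updLayer q SF) K (.last (outLayer q SF m Θ))).run H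
    ((inLayer q SF.length).apply H _) v j = _
  rw [chain_run]
  show (outLayer q SF m Θ).apply H (evalEmb H P SF K) v j = _
  simp only [GNNLayer.apply, outLayer]
  have hmem : Θ j ∈ SF := by
    rw [hSFdef]
    exact List.mem_flatMap.mpr ⟨Θ j, List.mem_ofFn.mpr ⟨j, rfl⟩, self_mem_subf _⟩
  have hlt : SF.idxOf (Θ j) < SF.length := List.idxOf_lt_length_iff.mpr hmem
  rw [nth_eq _ _ (by omega : q + SF.idxOf (Θ j) < (q + SF.length) + (q + SF.length))]
  rw [append_apply_lt _ _ _ (by omega : q + SF.idxOf (Θ j) < q + SF.length) (by omega)]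
  have hget : SF.get ⟨SF.idxOf (Θ j), hlt⟩ = Θ j := by
    simp [List.get_eq_getElem, List.getElem_idxOf]
  have hh : hgt (SF.get ⟨SF.idxOf (Θ j), hlt⟩) < K := by
    rw [hget, hK]
    have := le_foldr_max (SF.map hgt) (hgt (Θ j)) (List.mem_map_of_mem hmem)
    omega
  rw [evalEmb_slot H P SF hcl K _ hlt hh v, hget]

lemma ind_congr {X Y : Prop} (h : X ↔ Y) : ind X = ind Y := by
  unfold ind; split <;> simp_all

lemma natCard_congr {V : Type} {A B : V → Prop} (h : ∀ u, A u ↔ B u) :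
    Nat.card {u // A u} = Nat.card {u // B u} :=
  Nat.card_congr (Equiv.subtypeEquivRight h)

section Canonical

variable {p : ℕ}

/-- The canonical assignment determined by a tuple of markings. -/
def gOf {H : LGraph p} {n : ℕ} (ms : Fin n → Option H.V) : ℕ → Option H.V :=
  fun y => if h : y < n then ms ⟨y, h⟩ else none

/-- The canonical atom interpretation of a marked graph. -/
def embP {n : ℕ} (H : LGraph p) (ms : Fin n → Option H.V) :
    H.V → Fin (p + n) → Prop :=
  fun v i => if h : (i : ℕ) < p then H.lab v ⟨(i : ℕ), h⟩
    else ms ⟨(i : ℕ) - p, by have := i.isLt; omega⟩ = some v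

/-- The canonical embedding of a marked graph. -/
noncomputable def embOf {n : ℕ} (H : LGraph p) (ms : Fin n → Option H.V) :
    H.V → Fin (p + n) → ℝ :=
  fun v i => ind (embP H ms v i)

lemma embOf_zero (H : LGraph p) (ms : Fin 0 → Option H.V) :
    embOf H ms = H.embG := by
  funext v i
  unfold embOf embP LGraph.embG ind
  have hi : (i : ℕ) < p := by have := i.isLt; omega
  rw [dif_pos hi]
  congr 1

/-- Restriction of markings to an induced subgraph. -/
def restrictMs {H : LGraph p} (S : Set H.V) {n : ℕ} (ms : Fin n → Option H.V) :
    Fin n → Option (H.induce S).V :=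
  fun i => (ms i).bind (fun w => if h : w ∈ S then some ⟨w, h⟩ else none)

lemma gOf_snoc (H : LGraph p) (v : H.V) (r : ℕ) {n : ℕ} (ms : Fin n → Option H.V) :
    gOf (Fin.snoc (restrictMs {u | H.within v r u} ms)
        (some (H.ballCenter v r))) =
      restrictAssign {u | H.within v r u} (Function.update (gOf ms) n (some v)) := by
  funext y
  unfold gOf restrictAssign Function.update
  by_cases h1 : y < n
  · rw [dif_pos (by omega : y < n + 1)]
    rw [show (⟨y, by omega⟩ : Fin (n + 1)) = Fin.castSucc ⟨y, h1⟩ from rfl,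
      Fin.snoc_castSucc]
    simp only [dif_neg (by omega : ¬ y = n), dif_pos h1]
    rfl
  · by_cases h2 : y = n
    · subst h2
      rw [dif_pos (by omega : y < y + 1)]
      rw [show (⟨y, by omega⟩ : Fin (y + 1)) = Fin.last y from rfl, Fin.snoc_last]
      simp only [dif_pos rfl]
      show _ = (some v).bind _
      rw [Option.bind_some]
      rw [dif_pos (show v ∈ {u | H.within v r u} from H.within_self v r)]
      rfl
    · rw [dif_neg (by omega : ¬ y < n + 1)]
      simp only [dif_neg h2, dif_neg h1]
      rfl

lemma embOf_snoc (H : LGraph p) (v : H.V) (r : ℕ) {n : ℕ} (ms : Fin n → Option H.V)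
    (u : (H.ball v r).V) :
    Fin.append (embOf H ms u.1) (fun _ : Fin 1 => if u.1 = v then (1:ℝ) else 0) =
      embOf (H.ball v r)
        (Fin.snoc (restrictMs {w | H.within v r w} ms) (some (H.ballCenter v r))) u := by
  funext i
  rw [show i = ⟨(i : ℕ), i.isLt⟩ from rfl]
  by_cases h1 : (i : ℕ) < p + n
  · rw [append_apply_lt _ _ _ h1 i.isLt]
    by_cases h2 : (i : ℕ) < p
    · show ind _ = ind _
      apply ind_congr
      unfold embP
      rw [dif_pos h2, dif_pos h2]
      exact Iff.rfl
    · show ind _ = ind _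
      apply ind_congr
      unfold embP
      rw [dif_neg h2, dif_neg h2]
      have hlt : (i : ℕ) - p < n := by omega
      erw [show (⟨(i:ℕ) - p, by omega⟩ : Fin (n + 1)) =
        Fin.castSucc ⟨(i:ℕ) - p, hlt⟩ from rfl, Fin.snoc_castSucc]
      show _ ↔ restrictMs _ ms _ = some u
      unfold restrictMs
      rw [show (⟨(i:ℕ) - p, by omega⟩ : Fin n) = ⟨(i:ℕ) - p, hlt⟩ from rfl]
      cases hms : ms ⟨(i:ℕ) - p, hlt⟩ with
      | none => simp
      | some w =>
          rw [Option.bind_some]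
          by_cases hw : w ∈ {x | H.within v r x}
          · rw [dif_pos hw]
            constructor
            · rintro h; cases h; exact congrArg some (Subtype.ext rfl)
            · rintro h
              have : (⟨w, hw⟩ : (H.ball v r).V) = u := by
                exact Option.some_injective _ h
              cases this; rfl
          · rw [dif_neg hw]
            constructor
            · rintro h
              cases h
              exact absurd u.2 hw
            · rintro h; cases h
  · rw [append_apply_ge _ _ _ (by omega) i.isLt]
    have h2 : (i : ℕ) = p + n := by have := i.isLt; omega
    show (if u.1 = v then (1:ℝ) else 0) = ind _
    have hind : (if u.1 = v then (1:ℝ) else 0) = ind (u.1 = v) := by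
      unfold ind; by_cases hc : u.1 = v <;> simp [hc]
    rw [hind]
    apply ind_congr
    unfold embP
    rw [dif_neg (by omega : ¬ (i : ℕ) < p)]
    erw [show (⟨(i:ℕ) - p, by omega⟩ : Fin (n + 1)) = Fin.last n from
      Fin.ext (by simp; omega), Fin.snoc_last]
    constructor
    · intro h
      apply congrArg some
      apply Subtype.ext
      show v = u.1
      exact h.symm
    · intro h
      have : H.ballCenter v r = u := Option.some_injective _ h
      rw [← this]
      rfl

/-- Canonical renaming of bound variables: level `lvl` bind uses variable `lvl`. -/
def can (vm : ℕ → Option ℕ) (lvl : ℕ) : GMLW p → GMLW p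
  | .prop i => .prop i
  | .var y =>
      match vm y with
      | some i => .var i
      | none => .not .top
  | .top => .top
  | .and φ ψ => .and (can vm lvl φ) (can vm lvl ψ)
  | .not φ => .not (can vm lvl φ)
  | .dia k φ => .dia k (can vm lvl φ)
  | .bindW x r' φ => .bindW lvl r' (can (Function.update vm x (some lvl)) (lvl + 1) φ)

/-- Canonically named formulas at context depth `n`. -/
def Canon : ℕ → GMLW p → Prop
  | _, .prop _ => True
  | _, .var _ => True
  | _, .top => True
  | n, .and φ ψ => Canon n φ ∧ Canon n ψ
  | n, .not φ => Canon n φ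
  | n, .dia _ φ => Canon n φ
  | n, .bindW x _ φ => x = n ∧ Canon (n + 1) φ

lemma can_canon (φ : GMLW p) : ∀ vm lvl, Canon lvl (can vm lvl φ) := by
  induction φ with
  | prop i => intro vm lvl; trivial
  | var y => intro vm lvl; unfold can; cases vm y <;> trivial
  | top => intro vm lvl; trivial
  | and φ ψ ihφ ihψ => intro vm lvl; exact ⟨ihφ vm lvl, ihψ vm lvl⟩
  | not φ ih => intro vm lvl; exact ih vm lvl
  | dia k φ ih => intro vm lvl; exact ih vm lvl
  | bindW x r' φ ih => intro vm lvl; exact ⟨rfl, ih _ _⟩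

lemma can_radIs {r : ℕ} (φ : GMLW p) (h : φ.radIs r) :
    ∀ vm lvl, (can vm lvl φ).radIs r := by
  induction φ with
  | prop i => intro vm lvl; trivial
  | var y => intro vm lvl; unfold can; cases vm y <;> trivial
  | top => intro vm lvl; trivial
  | and φ ψ ihφ ihψ => intro vm lvl; exact ⟨ihφ h.1 vm lvl, ihψ h.2 vm lvl⟩
  | not φ ih => intro vm lvl; exact ih h vm lvl
  | dia k φ ih => intro vm lvl; exact ih h vm lvl
  | bindW x r' φ ih => intro vm lvl; exact ⟨h.1, ih h.2 _ _⟩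

lemma can_bindDepth (φ : GMLW p) : ∀ vm lvl,
    (can vm lvl φ).bindDepth = φ.bindDepth := by
  induction φ with
  | prop i => intro vm lvl; rfl
  | var y => intro vm lvl; unfold can; cases vm y <;> rfl
  | top => intro vm lvl; rfl
  | and φ ψ ihφ ihψ =>
      intro vm lvl
      show max _ _ = max _ _
      rw [ihφ vm lvl, ihψ vm lvl]
  | not φ ih => intro vm lvl; exact ih vm lvl
  | dia k φ ih => intro vm lvl; exact ih vm lvl
  | bindW x r' φ ih =>
      intro vm lvl
      show _ + 1 = _ + 1
      rw [ih _ _]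

lemma can_free (φ : GMLW p) : ∀ vm lvl, (∀ y i, vm y = some i → i < lvl) →
    (can vm lvl φ).free ⊆ {i | ∃ y, vm y = some i} := by
  induction φ with
  | prop i => intro vm lvl _; show (∅ : Set ℕ) ⊆ _; simp
  | var y =>
      intro vm lvl _
      unfold can
      cases hy : vm y with
      | none => show GMLW.free (.not .top) ⊆ _; show (∅ : Set ℕ) ⊆ _; simp
      | some i =>
          intro z hz
          rcases hz with rfl
          exact ⟨y, hy⟩
  | top => intro vm lvl _; show (∅ : Set ℕ) ⊆ _; simp
  | and φ ψ ihφ ihψ =>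
      intro vm lvl hb
      exact Set.union_subset (ihφ vm lvl hb) (ihψ vm lvl hb)
  | not φ ih => intro vm lvl hb; exact ih vm lvl hb
  | dia k φ ih => intro vm lvl hb; exact ih vm lvl hb
  | bindW x r' φ ih =>
      intro vm lvl hb
      intro z hz
      obtain ⟨hz1, hz2⟩ := hz
      have hb' : ∀ y i, Function.update vm x (some lvl) y = some i → i < lvl + 1 := by
        intro y i hy
        by_cases hxy : y = x
        · subst hxy; rw [Function.update_self] at hy; cases hy; omega
        · rw [Function.update_of_ne hxy] at hy
          have := hb y i hy; omega
      obtain ⟨y, hy⟩ := ih _ _ hb' hz1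
      by_cases hxy : y = x
      · subst hxy
        rw [Function.update_self] at hy
        cases hy
        exact absurd rfl hz2
      · rw [Function.update_of_ne hxy] at hy
        exact ⟨y, hy⟩

lemma can_sentence (φ : GMLW p) : (can (fun _ => none) 0 φ).Sentence := by
  have := can_free φ (fun _ => none) 0 (by intro y i h; cases h)
  unfold GMLW.Sentence
  apply Set.eq_empty_iff_forall_notMem.mpr
  intro x hx
  obtain ⟨y, hy⟩ := this hx
  cases hy

lemma can_sat (φ : GMLW p) : ∀ (vm : ℕ → Option ℕ) (lvl : ℕ) (H : LGraph p)
    (g g' : ℕ → Option H.V) (v : H.V),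
    (∀ y i, vm y = some i → i < lvl) →
    (∀ y, match vm y with
      | some i => g' i = g y
      | none => g y = none) →
    (∀ j, lvl ≤ j → g' j = none) →
    ((can vm lvl φ).sat H g' v ↔ φ.sat H g v) := by
  induction φ with
  | prop i => intro vm lvl H g g' v _ _ _; exact Iff.rfl
  | var y =>
      intro vm lvl H g g' v hb hmatch hhigh
      have := hmatch y
      unfold can
      cases hy : vm y with
      | some i =>
          rw [hy] at this
          show g' i = some v ↔ g y = some v
          rw [this]
      | none =>
          rw [hy] at this
          show ¬ True ↔ g y = some v
          rw [this]
          simp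
  | top => intro vm lvl H g g' v _ _ _; exact Iff.rfl
  | and φ ψ ihφ ihψ =>
      intro vm lvl H g g' v hb hmatch hhigh
      exact and_congr (ihφ vm lvl H g g' v hb hmatch hhigh)
        (ihψ vm lvl H g g' v hb hmatch hhigh)
  | not φ ih =>
      intro vm lvl H g g' v hb hmatch hhigh
      exact not_congr (ih vm lvl H g g' v hb hmatch hhigh)
  | dia k φ ih =>
      intro vm lvl H g g' v hb hmatch hhigh
      show k ≤ Nat.card _ ↔ k ≤ Nat.card _
      rw [natCard_congr (fun u =>
        and_congr Iff.rfl (ih vm lvl H g g' u hb hmatch hhigh))]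
  | bindW x r' φ ih =>
      intro vm lvl H g g' v hb hmatch hhigh
      show (can _ (lvl+1) φ).sat _ _ _ ↔ φ.sat _ _ _
      apply ih
      · intro y i hy
        by_cases hxy : y = x
        · subst hxy; rw [Function.update_self] at hy; cases hy; omega
        · rw [Function.update_of_ne hxy] at hy
          have := hb y i hy; omega
      · intro y
        by_cases hxy : y = x
        · subst hxy
          rw [Function.update_self]
          show restrictAssign _ (Function.update g' lvl (some v)) lvl =
            restrictAssign _ (Function.update g y (some v)) y
          unfold restrictAssign
          rw [Function.update_self, Function.update_self]
        · rw [Function.update_of_ne hxy]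
          cases hy : vm y with
          | some i =>
              show restrictAssign _ (Function.update g' lvl (some v)) i =
                restrictAssign _ (Function.update g x (some v)) y
              unfold restrictAssign
              have hilvl : i < lvl := hb y i hy
              rw [Function.update_of_ne (by omega : i ≠ lvl),
                Function.update_of_ne hxy]
              have := hmatch y
              rw [hy] at this
              rw [this]
          | none =>
              have := hmatch y
              rw [hy] at this
              show restrictAssign _ (Function.update g x (some v)) y = none
              unfold restrictAssign
              rw [Function.update_of_ne hxy, this]
              rfl
      · intro j hj
        show restrictAssign _ (Function.update g' lvl (some v)) j = none
        unfold restrictAssign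
        rw [Function.update_of_ne (by omega : j ≠ lvl), hhigh j (by omega)]
        rfl

lemma can_satS (φ : GMLW p) (H : LGraph p) (v : H.V) :
    (can (fun _ => none) 0 φ).satS H v ↔ φ.satS H v := by
  unfold GMLW.satS
  exact can_sat φ (fun _ => none) 0 H (fun _ => none) (fun _ => none) v
    (by intro y i h; cases h) (by intro y; rfl) (by intro j _; rfl)

end Canonical

section Invariance

variable {p : ℕ}

/-- Closure conditions for a collection of formulas. -/
def GoodClosed (Good : GMLW p → Prop) : Prop :=
  (∀ i, Good (.prop i)) ∧ (∀ y, Good (.var y)) ∧ Good .top ∧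
  (∀ φ ψ, Good φ → Good ψ → Good (.and φ ψ)) ∧
  (∀ φ, Good φ → Good (.not φ)) ∧
  (∀ k φ, Good φ → Good (.dia k φ))

def bigAnd : List (GMLW p) → GMLW p := List.foldr .and .top

def bigOr : List (GMLW p) → GMLW p :=
  List.foldr (fun a b => .not (.and (.not a) (.not b))) (.not .top)

lemma bigAnd_sat (l : List (GMLW p)) (H : LGraph p) (g : ℕ → Option H.V) (v : H.V) :
    (bigAnd l).sat H g v ↔ ∀ φ ∈ l, φ.sat H g v := by
  induction l with
  | nil => show True ↔ _; simp
  | cons a t ih =>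
      show a.sat H g v ∧ (bigAnd t).sat H g v ↔ _
      rw [ih]
      simp

lemma bigOr_sat (l : List (GMLW p)) (H : LGraph p) (g : ℕ → Option H.V) (v : H.V) :
    (bigOr l).sat H g v ↔ ∃ φ ∈ l, φ.sat H g v := by
  induction l with
  | nil => show ¬ True ↔ _; simp
  | cons a t ih =>
      show ¬ (¬ a.sat H g v ∧ ¬ (bigOr t).sat H g v) ↔ _
      rw [ih]
      constructor
      · intro h
        by_cases ha : a.sat H g v
        · exact ⟨a, by simp, ha⟩
        · have ht : ∃ φ ∈ t, φ.sat H g v := by tauto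
          obtain ⟨φ, h1, h2⟩ := ht
          exact ⟨φ, by simp [h1], h2⟩
      · rintro ⟨φ, hφ, hsat⟩ ⟨hna, hnt⟩
        rcases List.mem_cons.mp hφ with rfl | hmem
        · exact hna hsat
        · exact hnt ⟨φ, hmem, hsat⟩

lemma bigAnd_good {Good : GMLW p → Prop} (hG : GoodClosed Good) (l : List (GMLW p))
    (h : ∀ φ ∈ l, Good φ) : Good (bigAnd l) := by
  induction l with
  | nil => exact hG.2.2.1
  | cons a t ih =>
      exact hG.2.2.2.1 _ _ (h a (by simp)) (ih (fun φ hφ => h φ (by simp [hφ])))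

lemma bigOr_good {Good : GMLW p → Prop} (hG : GoodClosed Good) (l : List (GMLW p))
    (h : ∀ φ ∈ l, Good φ) : Good (bigOr l) := by
  induction l with
  | nil => exact hG.2.2.2.2.1 _ hG.2.2.1
  | cons a t ih =>
      exact hG.2.2.2.2.1 _ (hG.2.2.2.1 _ _ (hG.2.2.2.2.1 _ (h a (by simp)))
        (hG.2.2.2.2.1 _ (ih (fun φ hφ => h φ (by simp [hφ])))))

variable (Good : GMLW p → Prop) {n : ℕ} (H H' : LGraph p)
  (ms : Fin n → Option H.V) (ms' : Fin n → Option H'.V)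

/-- Satisfaction on the disjoint union of the two marked graphs. -/
def sats : H.V ⊕ H'.V → GMLW p → Prop :=
  Sum.elim (fun u ψ => ψ.sat H (gOf ms) u) (fun u ψ => ψ.sat H' (gOf ms') u)

/-- Neighbour multisets on the disjoint union. -/
noncomputable def nbrs : H.V ⊕ H'.V → Multiset (H.V ⊕ H'.V) :=
  Sum.elim (fun u => (H.nbrFinset u).val.map Sum.inl)
    (fun u => (H'.nbrFinset u).val.map Sum.inr)

/-- Logical equivalence (w.r.t. `Good` formulas) on the disjoint union. -/
def REq (a b : H.V ⊕ H'.V) : Prop :=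
  ∀ ψ, Good ψ → (sats H H' ms ms' a ψ ↔ sats H H' ms ms' b ψ)

lemma REq_refl (a : H.V ⊕ H'.V) : REq Good H H' ms ms' a a := fun _ _ => Iff.rfl

lemma sats_bigAnd (c : H.V ⊕ H'.V) (l : List (GMLW p)) :
    sats H H' ms ms' c (bigAnd l) ↔ ∀ φ ∈ l, sats H H' ms ms' c φ := by
  cases c with
  | inl u => exact bigAnd_sat l H (gOf ms) u
  | inr u => exact bigAnd_sat l H' (gOf ms') u

lemma sats_bigOr (c : H.V ⊕ H'.V) (l : List (GMLW p)) :
    sats H H' ms ms' c (bigOr l) ↔ ∃ φ ∈ l, sats H H' ms ms' c φ := by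
  cases c with
  | inl u => exact bigOr_sat l H (gOf ms) u
  | inr u => exact bigOr_sat l H' (gOf ms') u

lemma sats_dia (a : H.V ⊕ H'.V) (k : ℕ) (ψ : GMLW p) :
    sats H H' ms ms' a (.dia k ψ) ↔
      k ≤ Multiset.card ((nbrs H H' a).filter (fun x => sats H H' ms ms' x ψ)) := by
  classical
  cases a with
  | inl u =>
      show k ≤ Nat.card {w : H.V // H.adj u w ∧ ψ.sat H (gOf ms) w} ↔ _
      show _ ↔ k ≤ Multiset.card (((H.nbrFinset u).val.map Sum.inl).filter
        (fun x => sats H H' ms ms' x ψ))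
      rw [Multiset.filter_map, Multiset.card_map]
      have hfc : Multiset.filter ((fun x => sats H H' ms ms' x ψ) ∘ Sum.inl)
          (H.nbrFinset u).val =
          Multiset.filter (fun w => ψ.sat H (gOf ms) w) (H.nbrFinset u).val :=
        Multiset.filter_congr (fun x _ => Iff.rfl)
      rw [hfc, ← card_filter_nbr H u (fun w => ψ.sat H (gOf ms) w)]
  | inr u =>
      show k ≤ Nat.card {w : H'.V // H'.adj u w ∧ ψ.sat H' (gOf ms') w} ↔ _
      show _ ↔ k ≤ Multiset.card (((H'.nbrFinset u).val.map Sum.inr).filter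
        (fun x => sats H H' ms ms' x ψ))
      rw [Multiset.filter_map, Multiset.card_map]
      have hfc : Multiset.filter ((fun x => sats H H' ms ms' x ψ) ∘ Sum.inr)
          (H'.nbrFinset u).val =
          Multiset.filter (fun w => ψ.sat H' (gOf ms') w) (H'.nbrFinset u).val :=
        Multiset.filter_congr (fun x _ => Iff.rfl)
      rw [hfc, ← card_filter_nbr H' u (fun w => ψ.sat H' (gOf ms') w)]

lemma count_eq (hG : GoodClosed Good) {a b : H.V ⊕ H'.V}
    (hR : REq Good H H' ms ms' a b) (ψ : GMLW p) (hψ : Good ψ) :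
    Multiset.card ((nbrs H H' a).filter (fun x => sats H H' ms ms' x ψ)) =
      Multiset.card ((nbrs H H' b).filter (fun x => sats H H' ms ms' x ψ)) := by
  classical
  apply le_antisymm
  · exact (sats_dia H H' ms ms' b _ ψ).mp
      ((hR (.dia _ ψ) (hG.2.2.2.2.2 _ _ hψ)).mp
        ((sats_dia H H' ms ms' a _ ψ).mpr le_rfl))
  · exact (sats_dia H H' ms ms' a _ ψ).mp
      ((hR (.dia _ ψ) (hG.2.2.2.2.2 _ _ hψ)).mpr
        ((sats_dia H H' ms ms' b _ ψ).mpr le_rfl))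

/-- A formula witnessing `sats a` but not `sats b`, when one exists. -/
noncomputable def dst (a b : H.V ⊕ H'.V) : GMLW p :=
  if h : ∃ ψ, Good ψ ∧ sats H H' ms ms' a ψ ∧ ¬ sats H H' ms ms' b ψ
  then h.choose else .top

lemma dst_spec (hG : GoodClosed Good) {a b : H.V ⊕ H'.V}
    (h : ¬ REq Good H H' ms ms' a b) :
    Good (dst Good H H' ms ms' a b) ∧ sats H H' ms ms' a (dst Good H H' ms ms' a b) ∧
      ¬ sats H H' ms ms' b (dst Good H H' ms ms' a b) := by
  have hex : ∃ ψ, Good ψ ∧ sats H H' ms ms' a ψ ∧ ¬ sats H H' ms ms' b ψ := by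
    unfold REq at h
    push_neg at h
    obtain ⟨ψ, hψ, hne⟩ := h
    rcases hne with ⟨ha, hb⟩ | ⟨hb, ha⟩
    · exact ⟨ψ, hψ, ha, hb⟩
    · refine ⟨.not ψ, hG.2.2.2.2.1 _ hψ, ?_, ?_⟩
      · cases a with
        | inl u => exact hb
        | inr u => exact hb
      · cases b with
        | inl u => exact fun hcon => hcon ha
        | inr u => exact fun hcon => hcon ha
  unfold dst
  rw [dif_pos hex]
  exact ⟨hex.choose_spec.1, hex.choose_spec.2.1, hex.choose_spec.2.2⟩

/-- Characteristic formula of the `REq`-class of `a`. -/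
noncomputable def chi (a : H.V ⊕ H'.V) : GMLW p :=
  bigAnd ((( Finset.univ.filter (fun b : H.V ⊕ H'.V => ¬ REq Good H H' ms ms' a b)).toList).map
    (dst Good H H' ms ms' a))

lemma chi_good (hG : GoodClosed Good) (a : H.V ⊕ H'.V) :
    Good (chi Good H H' ms ms' a) := by
  apply bigAnd_good hG
  intro φ hφ
  rw [List.mem_map] at hφ
  obtain ⟨b, hb, rfl⟩ := hφ
  rw [Finset.mem_toList, Finset.mem_filter] at hb
  exact (dst_spec Good H H' ms ms' hG hb.2).1

lemma chi_spec (hG : GoodClosed Good) (a b : H.V ⊕ H'.V) :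
    sats H H' ms ms' b (chi Good H H' ms ms' a) ↔ REq Good H H' ms ms' a b := by
  classical
  unfold chi
  rw [sats_bigAnd]
  constructor
  · intro hb
    by_contra hR
    have hbmem : b ∈ Finset.univ.filter (fun x : H.V ⊕ H'.V => ¬ REq Good H H' ms ms' a x) :=
      Finset.mem_filter.mpr ⟨Finset.mem_univ b, hR⟩
    have hmem := List.mem_map_of_mem (f := dst Good H H' ms ms' a) (Finset.mem_toList.mpr hbmem)
    exact (dst_spec Good H H' ms ms' hG hR).2.2 (hb _ hmem)
  · intro hR
    intro ψ hψ
    rw [List.mem_map] at hψ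
    obtain ⟨c, hc, rfl⟩ := hψ
    rw [Finset.mem_toList, Finset.mem_filter] at hc
    obtain ⟨hgood, hsatsa, -⟩ := dst_spec Good H H' ms ms' hG hc.2
    exact (hR _ hgood).mp hsatsa

/-- Equality of neighbour-embedding multisets for logically equivalent nodes. -/
lemma nbrs_map_eq (hG : GoodClosed Good) {D : ℕ} (E : H.V ⊕ H'.V → (Fin D → ℝ))
    (hE : ∀ a b, REq Good H H' ms ms' a b → E a = E b) {a b : H.V ⊕ H'.V}
    (hR : REq Good H H' ms ms' a b) :
    (nbrs H H' a).map E = (nbrs H H' b).map E := by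
  classical
  rw [Multiset.ext]
  intro z
  rw [Multiset.count_map, Multiset.count_map]
  set θ : GMLW p := bigOr (((Finset.univ.filter (fun c : H.V ⊕ H'.V => E c = z)).toList).map
    (chi Good H H' ms ms' )) with hθ
  have hθg : Good θ := by
    apply bigOr_good hG
    intro φ hφ
    rw [List.mem_map] at hφ
    obtain ⟨c, _, rfl⟩ := hφ
    exact chi_good Good H H' ms ms' hG c
  have hsat : ∀ x : H.V ⊕ H'.V, sats H H' ms ms' x θ ↔ z = E x := by
    intro x
    rw [hθ, sats_bigOr]
    constructor
    · rintro ⟨ψ, hψ, hx⟩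
      rw [List.mem_map] at hψ
      obtain ⟨c, hc, rfl⟩ := hψ
      rw [Finset.mem_toList, Finset.mem_filter] at hc
      have := (chi_spec Good H H' ms ms' hG c x).mp hx
      rw [← hE c x this, hc.2]
    · intro hz
      refine ⟨chi Good H H' ms ms' x, ?_, ?_⟩
      · exact List.mem_map_of_mem (Finset.mem_toList.mpr
          (Finset.mem_filter.mpr ⟨Finset.mem_univ x, hz.symm⟩))
      · exact (chi_spec Good H H' ms ms' hG x x).mpr (REq_refl Good H H' ms ms' x)
  have h1 : Multiset.filter (fun x => z = E x) (nbrs H H' a) =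
      Multiset.filter (fun x => sats H H' ms ms' x θ) (nbrs H H' a) :=
    Multiset.filter_congr (fun x _ => (hsat x).symm)
  have h2 : Multiset.filter (fun x => z = E x) (nbrs H H' b) =
      Multiset.filter (fun x => sats H H' ms ms' x θ) (nbrs H H' b) :=
    Multiset.filter_congr (fun x _ => (hsat x).symm)
  rw [h1, h2]
  exact count_eq Good H H' ms ms' hG hR θ hθg

/-- One message-passing layer preserves `REq`-respecting embeddings. -/
lemma layer_respects (hG : GoodClosed Good) {D D2 : ℕ} (l : GNNLayer D D2)
    (e : H.V → Fin D → ℝ) (e' : H'.V → Fin D → ℝ)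
    (hE : ∀ a b, REq Good H H' ms ms' a b → Sum.elim e e' a = Sum.elim e e' b) :
    ∀ a b, REq Good H H' ms ms' a b →
      Sum.elim (l.apply H e) (l.apply H' e') a = Sum.elim (l.apply H e) (l.apply H' e') b := by
  have key : ∀ a, Sum.elim (l.apply H e) (l.apply H' e') a =
      l.com (Fin.append (Sum.elim e e' a) (l.agg ((nbrs H H' a).map (Sum.elim e e')))) := by
    intro a
    cases a with
    | inl u =>
        show l.apply H e u = _
        unfold GNNLayer.apply nbrs
        simp only [Sum.elim_inl]
        rw [Multiset.map_map]
        rfl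
    | inr u =>
        show l.apply H' e' u = _
        unfold GNNLayer.apply nbrs
        simp only [Sum.elim_inr]
        rw [Multiset.map_map]
        rfl
  intro a b hR
  rw [key a, key b, hE a b hR,
    nbrs_map_eq Good H H' ms ms' hG (Sum.elim e e') hE hR]

/-- A GNN run preserves `REq`-respecting embeddings. -/
lemma gnn_respects (hG : GoodClosed Good) : ∀ {D D2 : ℕ} (N : GNN D D2)
    (e : H.V → Fin D → ℝ) (e' : H'.V → Fin D → ℝ),
    (∀ a b, REq Good H H' ms ms' a b → Sum.elim e e' a = Sum.elim e e' b) →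
    ∀ a b, REq Good H H' ms ms' a b →
      Sum.elim (N.run H e) (N.run H' e') a = Sum.elim (N.run H e) (N.run H' e') b := by
  intro D D2 N
  induction N with
  | last l => exact fun e e' hE => layer_respects Good H H' ms ms' hG l e e' hE
  | cons l rest ih =>
      intro e e' hE
      exact ih (l.apply H e) (l.apply H' e')
        (layer_respects Good H H' ms ms' hG l e e' hE)

/-- The initial (marked) embeddings respect `REq`. -/
lemma embOf_respects (hG : GoodClosed Good) :
    ∀ a b, REq Good H H' ms ms' a b →
      Sum.elim (embOf H ms) (embOf H' ms') a = Sum.elim (embOf H ms) (embOf H' ms') b := by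
  have key : ∀ (a : H.V ⊕ H'.V) (i : Fin (p + n)),
      Sum.elim (embOf H ms) (embOf H' ms') a i =
        ind (if h : (i : ℕ) < p then sats H H' ms ms' a (.prop ⟨(i : ℕ), h⟩)
          else sats H H' ms ms' a (.var ((i : ℕ) - p))) := by
    intro a i
    by_cases h : (i : ℕ) < p
    · rw [dif_pos h]
      cases a with
      | inl u =>
          show embOf H ms u i = ind (H.lab u ⟨(i : ℕ), h⟩)
          unfold embOf embP
          rw [dif_pos h]
      | inr u =>
          show embOf H' ms' u i = ind (H'.lab u ⟨(i : ℕ), h⟩)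
          unfold embOf embP
          rw [dif_pos h]
    · rw [dif_neg h]
      cases a with
      | inl u =>
          show embOf H ms u i = ind (gOf ms ((i : ℕ) - p) = some u)
          unfold embOf embP gOf
          rw [dif_neg h, dif_pos (by have := i.isLt; omega : (i : ℕ) - p < n)]
      | inr u =>
          show embOf H' ms' u i = ind (gOf ms' ((i : ℕ) - p) = some u)
          unfold embOf embP gOf
          rw [dif_neg h, dif_pos (by have := i.isLt; omega : (i : ℕ) - p < n)]
  intro a b hR
  funext i
  rw [key a i, key b i]
  by_cases h : (i : ℕ) < p
  · rw [dif_pos h, dif_pos h]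
    exact ind_congr (hR _ (hG.1 _))
  · rw [dif_neg h, dif_neg h]
    exact ind_congr (hR _ (hG.2.1 _))

end Invariance

/-- Main semantic invariance: logically equivalent marked pointed graphs get
equal HES-GNN embeddings. -/
lemma hes_respects {p : ℕ} (r : ℕ) (Good : ℕ → GMLW p → Prop)
    (hG : ∀ d, GoodClosed (Good d))
    (hBind : ∀ d (ψ : GMLW p) (m : ℕ), Good d ψ → Good (d + 1) (.bindW m r ψ)) :
    ∀ (d : ℕ) {n : ℕ} (H H' : LGraph p) (ms : Fin n → Option H.V)
      (ms' : Fin n → Option H'.V) (u : H.V) (u' : H'.V),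
    (∀ ψ, Good d ψ → (ψ.sat H (gOf ms) u ↔ ψ.sat H' (gOf ms') u')) →
    ∀ {D' : ℕ} (A : HESGNN d (p + n) D'), A.radIs r →
      A.run H (embOf H ms) u = A.run H' (embOf H' ms') u' := by
  intro d
  induction d with
  | zero =>
      intro n H H' ms ms' u u' hyp D' A hA
      cases A with
      | base N =>
          show N.run H (embOf H ms) u = N.run H' (embOf H' ms') u'
          have hR : REq (Good 0) H H' ms ms' (.inl u) (.inr u') := fun ψ hψ => hyp ψ hψ
          have := gnn_respects (Good 0) H H' ms ms' (hG 0) N (embOf H ms) (embOf H' ms')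
            (embOf_respects (Good 0) H H' ms ms' (hG 0)) (.inl u) (.inr u') hR
          exact this
  | succ d ih =>
      intro n H H' ms ms' u u' hyp D' A hA
      cases A with
      | nest r' B C =>
          obtain ⟨hr', hBrad0⟩ := hA
          have hBrad : B.radIs r := hr' ▸ hBrad0
          rw [show (HESGNN.nest r' B C) = (HESGNN.nest r B C) from by rw [hr']]
          show C.run H _ u = C.run H' _ u'
          -- the nested embeddings
          set e2 : H.V → Fin ((p + n) + _) → ℝ := fun v => Fin.append (embOf H ms v)
            (B.run (H.ball v r) (fun w => Fin.append (embOf H ms w.1)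
              (fun _ => if w.1 = v then (1:ℝ) else 0)) (H.ballCenter v r)) with he2
          set e2' : H'.V → Fin ((p + n) + _) → ℝ := fun v => Fin.append (embOf H' ms' v)
            (B.run (H'.ball v r) (fun w => Fin.append (embOf H' ms' w.1)
              (fun _ => if w.1 = v then (1:ℝ) else 0)) (H'.ballCenter v r)) with he2'
          -- B's run is logically invariant
          have hBrun : ∀ a b, REq (Good (d+1)) H H' ms ms' a b →
              Sum.elim (fun v => B.run (H.ball v r) (fun w => Fin.append (embOf H ms w.1)
                (fun _ => if w.1 = v then (1:ℝ) else 0)) (H.ballCenter v r))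
              (fun v => B.run (H'.ball v r) (fun w => Fin.append (embOf H' ms' w.1)
                (fun _ => if w.1 = v then (1:ℝ) else 0)) (H'.ballCenter v r)) a =
              Sum.elim (fun v => B.run (H.ball v r) (fun w => Fin.append (embOf H ms w.1)
                (fun _ => if w.1 = v then (1:ℝ) else 0)) (H.ballCenter v r))
              (fun v => B.run (H'.ball v r) (fun w => Fin.append (embOf H' ms' w.1)
                (fun _ => if w.1 = v then (1:ℝ) else 0)) (H'.ballCenter v r)) b := by
            intro a b hR
            have hsem : ∀ (va : H.V), (fun w : (H.ball va r).V => Fin.append (embOf H ms w.1)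
                (fun _ : Fin 1 => if w.1 = va then (1:ℝ) else 0)) =
                embOf (H.ball va r) (Fin.snoc (restrictMs {x | H.within va r x} ms)
                  (some (H.ballCenter va r))) := by
              intro va; funext w; exact embOf_snoc H va r ms w
            have hsem' : ∀ (va : H'.V), (fun w : (H'.ball va r).V => Fin.append (embOf H' ms' w.1)
                (fun _ : Fin 1 => if w.1 = va then (1:ℝ) else 0)) =
                embOf (H'.ball va r) (Fin.snoc (restrictMs {x | H'.within va r x} ms')
                  (some (H'.ballCenter va r))) := by
              intro va; funext w; exact embOf_snoc H' va r ms' w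
            -- helper: inner logical hypothesis from REq
            cases a with
            | inl va =>
                cases b with
                | inl vb =>
                    show B.run (H.ball va r) _ _ = B.run (H.ball vb r) _ _
                    rw [hsem va, hsem vb]
                    refine ih (n := n + 1) (H.ball va r) (H.ball vb r)
                      (Fin.snoc (restrictMs {x | H.within va r x} ms)
                        (some (H.ballCenter va r)))
                      (Fin.snoc (restrictMs {x | H.within vb r x} ms)
                        (some (H.ballCenter vb r)))
                      (H.ballCenter va r) (H.ballCenter vb r) ?_ B hBrad
                    intro ψ hψ
                    erw [gOf_snoc H va r ms, gOf_snoc H vb r ms]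
                    exact hR (.bindW n r ψ) (hBind d ψ n hψ)
                | inr vb =>
                    show B.run (H.ball va r) _ _ = B.run (H'.ball vb r) _ _
                    rw [hsem va, hsem' vb]
                    refine ih (n := n + 1) (H.ball va r) (H'.ball vb r)
                      (Fin.snoc (restrictMs {x | H.within va r x} ms)
                        (some (H.ballCenter va r)))
                      (Fin.snoc (restrictMs {x | H'.within vb r x} ms')
                        (some (H'.ballCenter vb r)))
                      (H.ballCenter va r) (H'.ballCenter vb r) ?_ B hBrad
                    intro ψ hψ
                    erw [gOf_snoc H va r ms, gOf_snoc H' vb r ms']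
                    exact hR (.bindW n r ψ) (hBind d ψ n hψ)
            | inr va =>
                cases b with
                | inl vb =>
                    show B.run (H'.ball va r) _ _ = B.run (H.ball vb r) _ _
                    rw [hsem' va, hsem vb]
                    refine ih (n := n + 1) (H'.ball va r) (H.ball vb r)
                      (Fin.snoc (restrictMs {x | H'.within va r x} ms')
                        (some (H'.ballCenter va r)))
                      (Fin.snoc (restrictMs {x | H.within vb r x} ms)
                        (some (H.ballCenter vb r)))
                      (H'.ballCenter va r) (H.ballCenter vb r) ?_ B hBrad
                    intro ψ hψ
                    erw [gOf_snoc H' va r ms', gOf_snoc H vb r ms]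
                    exact hR (.bindW n r ψ) (hBind d ψ n hψ)
                | inr vb =>
                    show B.run (H'.ball va r) _ _ = B.run (H'.ball vb r) _ _
                    rw [hsem' va, hsem' vb]
                    refine ih (n := n + 1) (H'.ball va r) (H'.ball vb r)
                      (Fin.snoc (restrictMs {x | H'.within va r x} ms')
                        (some (H'.ballCenter va r)))
                      (Fin.snoc (restrictMs {x | H'.within vb r x} ms')
                        (some (H'.ballCenter vb r)))
                      (H'.ballCenter va r) (H'.ballCenter vb r) ?_ B hBrad
                    intro ψ hψ
                    erw [gOf_snoc H' va r ms', gOf_snoc H' vb r ms']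
                    exact hR (.bindW n r ψ) (hBind d ψ n hψ)
          -- e2 respects REq at level d+1
          have he2resp : ∀ a b, REq (Good (d+1)) H H' ms ms' a b →
              Sum.elim e2 e2' a = Sum.elim e2 e2' b := by
            intro a b hR
            have hfirst := embOf_respects (Good (d+1)) H H' ms ms' (hG (d+1)) a b hR
            have hsecond := hBrun a b hR
            cases a <;> cases b <;>
              · simp only [Sum.elim_inl, Sum.elim_inr, he2, he2'] at *
                rw [hfirst, hsecond]
          have hR0 : REq (Good (d+1)) H H' ms ms' (.inl u) (.inr u') :=
            fun ψ hψ => hyp ψ hψ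
          have := gnn_respects (Good (d+1)) H H' ms ms' (hG (d+1)) C e2 e2'
            he2resp (.inl u) (.inr u') hR0
          exact this

section Construction

variable {p : ℕ}

noncomputable instance : DecidableEq (GMLW p) := Classical.decEq _

/-- Maximal `bindW`-subformulas. -/
def bwList : GMLW p → List (GMLW p)
  | .and φ ψ => bwList φ ++ bwList ψ
  | .not φ => bwList φ
  | .dia _ φ => bwList φ
  | .bindW x r' φ => [.bindW x r' φ]
  | _ => []

/-- Body of a `bindW`. -/
def bwBody : GMLW p → GMLW p
  | .bindW _ _ φ => φ
  | φ => φ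

lemma bwList_mem {r d n : ℕ} : ∀ (φ : GMLW p), Canon n φ → φ.radIs r →
    φ.bindDepth ≤ d + 1 → ∀ θ ∈ bwList φ,
    ∃ ψ : GMLW p, θ = .bindW n r ψ ∧ Canon (n + 1) ψ ∧ ψ.radIs r ∧ ψ.bindDepth ≤ d := by
  intro φ
  induction φ with
  | prop i => intro _ _ _ θ hθ; cases hθ
  | var y => intro _ _ _ θ hθ; cases hθ
  | top => intro _ _ _ θ hθ; cases hθ
  | and φ ψ ihφ ihψ =>
      intro hC hr hd θ hθ
      rcases List.mem_append.mp hθ with h | h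
      · exact ihφ hC.1 hr.1 (by
          have : φ.bindDepth ≤ max φ.bindDepth ψ.bindDepth := le_max_left _ _
          show φ.bindDepth ≤ d + 1
          calc φ.bindDepth ≤ max φ.bindDepth ψ.bindDepth := this
            _ ≤ d + 1 := hd) θ h
      · exact ihψ hC.2 hr.2 (by
          show ψ.bindDepth ≤ d + 1
          calc ψ.bindDepth ≤ max φ.bindDepth ψ.bindDepth := le_max_right _ _
            _ ≤ d + 1 := hd) θ h
  | not φ ih => intro hC hr hd θ hθ; exact ih hC hr hd θ hθ
  | dia k φ ih => intro hC hr hd θ hθ; exact ih hC hr hd θ hθ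
  | bindW x r' φ ih =>
      intro hC hr hd θ hθ
      rcases List.mem_singleton.mp hθ with rfl
      obtain ⟨rfl, hC2⟩ := hC
      obtain ⟨rfl, hr2⟩ := hr
      exact ⟨φ, rfl, hC2, hr2, by
        have : φ.bindDepth + 1 ≤ d + 1 := hd
        omega⟩

lemma bwList_nil : ∀ (φ : GMLW p), φ.bindDepth = 0 → bwList φ = [] := by
  intro φ
  induction φ with
  | prop i => intro _; rfl
  | var y => intro _; rfl
  | top => intro _; rfl
  | and φ ψ ihφ ihψ =>
      intro h
      show bwList φ ++ bwList ψ = []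
      have h1 : φ.bindDepth = 0 ∧ ψ.bindDepth = 0 := by
        have : max φ.bindDepth ψ.bindDepth = 0 := h
        omega
      rw [ihφ h1.1, ihψ h1.2]
      rfl
  | not φ ih => exact ih
  | dia k φ ih => exact ih
  | bindW x r' φ ih =>
      intro h
      exact absurd h (by show ¬ φ.bindDepth + 1 = 0; omega)

/-- Translation of (canonical) `GMLW` formulas into pure modal formulas over
`p + n + |Ψ|` atoms, where maximal `bindW` subformulas become fresh atoms. -/
noncomputable def tr (n : ℕ) (Ψ : List (GMLW p)) : GMLW p → GML (p + n + Ψ.length)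
  | .prop i => .prop ⟨(i : ℕ), by have := i.isLt; omega⟩
  | .var y => if h : y < n then .prop ⟨p + y, by omega⟩ else .not .top
  | .top => .top
  | .and φ ψ => .and (tr n Ψ φ) (tr n Ψ ψ)
  | .not φ => .not (tr n Ψ φ)
  | .dia k φ => .dia k (tr n Ψ φ)
  | .bindW x r' φ =>
      if h : (GMLW.bindW x r' φ) ∈ Ψ then
        .prop ⟨p + n + Ψ.idxOf (.bindW x r' φ), by
          have := List.idxOf_lt_length_iff.mpr h; omega⟩
      else .not .top

/-- Atom interpretation matching the marked embedding plus `bindW`-values. -/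
def PFor {n : ℕ} (H : LGraph p) (ms : Fin n → Option H.V) (Ψ : List (GMLW p)) :
    H.V → Fin (p + n + Ψ.length) → Prop :=
  fun v i => if h1 : (i : ℕ) < p + n then embP H ms v ⟨(i : ℕ), h1⟩
    else (Ψ.get ⟨(i : ℕ) - (p + n), by have := i.isLt; omega⟩).sat H (gOf ms) v

lemma tr_sat {n : ℕ} (H : LGraph p) (ms : Fin n → Option H.V) (Ψ : List (GMLW p)) :
    ∀ (φ : GMLW p), Canon n φ → (∀ θ ∈ bwList φ, θ ∈ Ψ) → ∀ (v : H.V),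
    (msat H (PFor H ms Ψ) (tr n Ψ φ) v ↔ φ.sat H (gOf ms) v) := by
  intro φ
  induction φ with
  | prop i =>
      intro _ _ v
      show PFor H ms Ψ v _ ↔ H.lab v i
      unfold PFor
      rw [dif_pos (show (i : ℕ) < p + n by have := i.isLt; omega)]
      unfold embP
      rw [dif_pos i.isLt]
  | var y =>
      intro _ _ v
      unfold tr
      by_cases h : y < n
      · rw [dif_pos h]
        show PFor H ms Ψ v _ ↔ gOf ms y = some v
        unfold PFor
        rw [dif_pos (by omega : p + y < p + n)]
        unfold embP
        rw [dif_neg (by omega : ¬ p + y < p)]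
        unfold gOf
        rw [dif_pos h]
        have : (⟨p + y - p, by omega⟩ : Fin n) = ⟨y, h⟩ := by
          rw [Fin.mk.injEq]; omega
        rw [this]
      · rw [dif_neg h]
        show ¬ True ↔ gOf ms y = some v
        unfold gOf
        rw [dif_neg h]
        simp
  | top => intro _ _ v; exact Iff.rfl
  | and φ ψ ihφ ihψ =>
      intro hC hsub v
      exact and_congr
        (ihφ hC.1 (fun θ hθ => hsub θ (List.mem_append.mpr (Or.inl hθ))) v)
        (ihψ hC.2 (fun θ hθ => hsub θ (List.mem_append.mpr (Or.inr hθ))) v)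
  | not φ ih => intro hC hsub v; exact not_congr (ih hC hsub v)
  | dia k φ ih =>
      intro hC hsub v
      show k ≤ Nat.card _ ↔ k ≤ Nat.card _
      rw [natCard_congr (fun u => and_congr Iff.rfl (ih hC hsub u))]
  | bindW x r' φ ih =>
      intro hC hsub v
      have hmem : (GMLW.bindW x r' φ) ∈ Ψ := hsub _ (List.mem_singleton.mpr rfl)
      unfold tr
      rw [dif_pos hmem]
      show PFor H ms Ψ v _ ↔ _
      unfold PFor
      have hlt := List.idxOf_lt_length_iff.mpr hmem
      rw [dif_neg (by omega : ¬ p + n + Ψ.idxOf (GMLW.bindW x r' φ) < p + n)]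
      have hidx : (⟨p + n + Ψ.idxOf (GMLW.bindW x r' φ) - (p + n), by omega⟩ :
          Fin Ψ.length) = ⟨Ψ.idxOf (GMLW.bindW x r' φ), hlt⟩ := Fin.ext (by simp)
      rw [hidx]
      have hget : Ψ.get ⟨Ψ.idxOf (GMLW.bindW x r' φ), hlt⟩ = GMLW.bindW x r' φ := by
        simp [List.get_eq_getElem, List.getElem_idxOf]
      rw [hget]

lemma embOf_eq_PFor_nil {n : ℕ} (H : LGraph p) (ms : Fin n → Option H.V) :
    embOf H ms = fun (u : H.V) (i : Fin (p + n + ([] : List (GMLW p)).length)) =>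
      ind (PFor H ms [] u i) := by
  funext u i
  unfold embOf PFor
  have h1 : (i : ℕ) < p + n := by have := i.isLt; omega
  rw [dif_pos h1]

/-- The construction: an HES-GNN of depth `d` and radius `r` computing any
family of canonical `GMLW` formulas of bind-depth at most `d`. -/
lemma hes_of_gmlw (r : ℕ) : ∀ (d : ℕ) {n m : ℕ} (Φ : Fin m → GMLW p),
    (∀ j, Canon n (Φ j) ∧ (Φ j).radIs r ∧ (Φ j).bindDepth ≤ d) →
    ∃ A : HESGNN d (p + n) m, A.radIs r ∧
      ∀ (H : LGraph p) (ms : Fin n → Option H.V) (v : H.V) (j : Fin m),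
        A.run H (embOf H ms) v j = ind ((Φ j).sat H (gOf ms) v) := by
  intro d
  induction d with
  | zero =>
      intro n m Φ hΦ
      obtain ⟨N, hN⟩ := gnn_of_gml (fun j => tr n ([] : List (GMLW p)) (Φ j))
      refine ⟨.base N, trivial, ?_⟩
      intro H ms v j
      show N.run H (embOf H ms) v j = _
      rw [embOf_eq_PFor_nil H ms, hN H (PFor H ms []) v j]
      apply ind_congr
      apply tr_sat H ms [] (Φ j) (hΦ j).1
      · intro θ hθ
        rw [bwList_nil (Φ j) (by have := (hΦ j).2.2; omega)] at hθ
        cases hθ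
  | succ d ih =>
      intro n m Φ hΦ
      set Ψ : List (GMLW p) := (List.ofFn Φ).flatMap bwList with hΨdef
      have hΨmem : ∀ θ ∈ Ψ, ∃ ψ : GMLW p, θ = .bindW n r ψ ∧ Canon (n + 1) ψ ∧
          ψ.radIs r ∧ ψ.bindDepth ≤ d := by
        intro θ hθ
        rw [hΨdef, List.mem_flatMap] at hθ
        obtain ⟨φ0, hφ0, hθ2⟩ := hθ
        obtain ⟨j, rfl⟩ := List.mem_ofFn.mp hφ0
        exact bwList_mem (Φ j) (hΦ j).1 (hΦ j).2.1 (hΦ j).2.2 θ hθ2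
      have hbody : ∀ jj : Fin Ψ.length, Ψ.get jj = .bindW n r (bwBody (Ψ.get jj)) ∧
          Canon (n + 1) (bwBody (Ψ.get jj)) ∧ (bwBody (Ψ.get jj)).radIs r ∧
          (bwBody (Ψ.get jj)).bindDepth ≤ d := by
        intro jj
        obtain ⟨ψ, hψ1, hψ2, hψ3, hψ4⟩ := hΨmem (Ψ.get jj) (List.get_mem Ψ jj)
        rw [hψ1]
        exact ⟨rfl, hψ2, hψ3, hψ4⟩
      obtain ⟨B, hBrad, hBrun⟩ := ih (n := n + 1) (m := Ψ.length)
        (fun jj => bwBody (Ψ.get jj))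
        (fun jj => (hbody jj).2)
      obtain ⟨C, hC⟩ := gnn_of_gml (fun j => tr n Ψ (Φ j))
      refine ⟨.nest r B C, ⟨rfl, hBrad⟩, ?_⟩
      intro H ms v j
      show C.run H _ v j = _
      have hemb : (fun u : H.V => Fin.append (embOf H ms u)
          (B.run (H.ball u r) (fun w => Fin.append (m := p + n) (n := 1) (embOf H ms w.1)
            (fun _ : Fin 1 => if w.1 = u then (1:ℝ) else 0)) (H.ballCenter u r))) =
          fun u i => ind (PFor H ms Ψ u i) := by
        funext u i
        by_cases h1 : (i : ℕ) < p + n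
        · rw [show i = ⟨(i : ℕ), i.isLt⟩ from rfl]
          rw [append_apply_lt _ _ _ h1 i.isLt]
          unfold PFor
          rw [dif_pos h1]
          rfl
        · rw [show i = ⟨(i : ℕ), i.isLt⟩ from rfl]
          rw [append_apply_ge _ _ _ (by omega) i.isLt]
          have hinner : (fun w : (H.ball u r).V =>
              Fin.append (m := p + n) (n := 1) (embOf H ms w.1)
              (fun _ : Fin 1 => if w.1 = u then (1:ℝ) else 0)) =
              embOf (H.ball u r) (Fin.snoc (restrictMs {x | H.within u r x} ms)
                (some (H.ballCenter u r))) := by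
            funext w; exact embOf_snoc H u r ms w
          rw [hinner]
          have hlt2 : (i : ℕ) - (p + n) < Ψ.length := by have := i.isLt; omega
          rw [hBrun (H.ball u r) _ (H.ballCenter u r) ⟨(i : ℕ) - (p + n), hlt2⟩]
          unfold PFor
          rw [dif_neg h1]
          apply ind_congr
          erw [gOf_snoc H u r ms]
          have hb := (hbody ⟨(i : ℕ) - (p + n), hlt2⟩).1
          constructor
          · intro hs
            rw [hb]
            exact hs
          · intro hs
            rw [hb] at hs
            exact hs
      rw [hemb, hC H (PFor H ms Ψ) v j]
      apply ind_congr
      apply tr_sat H ms Ψ (Φ j) (hΦ j).1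
      intro θ hθ
      rw [hΨdef]
      exact List.mem_flatMap.mpr ⟨Φ j, List.mem_ofFn.mpr ⟨j, rfl⟩, hθ⟩

end Construction

section Assembly

variable {p : ℕ}

lemma good1_closed (r d : ℕ) :
    GoodClosed (fun ψ : GMLW p => ψ.radIs r ∧ ψ.bindDepth ≤ d) := by
  refine ⟨fun i => ⟨trivial, Nat.zero_le d⟩, fun y => ⟨trivial, Nat.zero_le d⟩,
    ⟨trivial, Nat.zero_le d⟩, ?_, ?_, ?_⟩
  · intro φ ψ h1 h2
    refine ⟨⟨h1.1, h2.1⟩, ?_⟩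
    show max φ.bindDepth ψ.bindDepth ≤ d
    exact max_le h1.2 h2.2
  · intro φ h; exact h
  · intro k φ h; exact h

lemma good2_closed (r : ℕ) : GoodClosed (fun ψ : GMLW p => ψ.radIs r) :=
  ⟨fun _ => trivial, fun _ => trivial, trivial,
    fun _ _ h1 h2 => ⟨h1, h2⟩, fun _ h => h, fun _ _ h => h⟩

lemma gOf_zero {H : LGraph p} (ms : Fin 0 → Option H.V) :
    gOf ms = fun _ => none :=
  funext fun y => dif_neg (by omega)

/-- Bridge: the constructed HES-GNN classifies `φ` on every pointed graph. -/
lemma cls_bridge {r d : ℕ} (φ : GMLW p) (hC : Canon 0 (can (fun _ => none) 0 φ))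
    (A : HESGNN d (p + 0) 1)
    (hArun : ∀ (H : LGraph p) (ms : Fin 0 → Option H.V) (v : H.V) (j : Fin 1),
      A.run H (embOf H ms) v j = ind ((can (fun _ => none) 0 φ).sat H (gOf ms) v))
    (K : LGraph p) (w : K.V) :
    (HESGNN.clsP A K w ↔ φ.satS K w) := by
  show 0 < A.run K K.embG w 0 ↔ _
  rw [← embOf_zero K (fun _ => none)]
  rw [hArun K (fun _ => none) w 0]
  rw [ind_pos_iff]
  rw [gOf_zero (fun _ : Fin 0 => (none : Option K.V))]
  show (can (fun _ => none) 0 φ).satS K w ↔ _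
  exact can_satS φ K w

/-- Semantic direction, packaged at the top level. -/
lemma respects_bridge {r d : ℕ} (Good : ℕ → GMLW p → Prop)
    (hG : ∀ d', GoodClosed (Good d'))
    (hBind : ∀ d' (ψ : GMLW p) (m : ℕ), Good d' ψ → Good (d' + 1) (.bindW m r ψ))
    (G G' : LGraph p) (v : G.V) (v' : G'.V)
    (hhyp : ∀ ψ : GMLW p, Good d ψ → (ψ.satS G v ↔ ψ.satS G' v'))
    (A : HESGNN d (p + 0) 1) (hArad : A.radIs r) :
    (HESGNN.clsP A G v ↔ HESGNN.clsP A G' v') := by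
  have hrun := hes_respects r Good hG hBind d G G'
    (fun _ : Fin 0 => (none : Option G.V)) (fun _ : Fin 0 => (none : Option G'.V))
    v v' (by
      intro ψ hψ
      rw [gOf_zero (fun _ : Fin 0 => (none : Option G.V)),
        gOf_zero (fun _ : Fin 0 => (none : Option G'.V))]
      exact hhyp ψ hψ) A hArad
  show 0 < A.run G G.embG v 0 ↔ 0 < A.run G' G'.embG v' 0
  rw [← embOf_zero G (fun _ => none), ← embOf_zero G' (fun _ => none), hrun]

end Assembly

end HesAux


end HesAux

/-- For all `d ≥ 0` and `r ≥ 1`,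
ρ(HES-GNN-(d,r)) = ρ(GML(↓^d_{W^r})), and moreover
ρ(HES-GNN with radius r, any depth) = ρ(GML(↓_{W^r})). -/
theorem hesgnn_dr_eq_gmlw_dr (p d r : ℕ) (hr : 1 ≤ r)
    (G G' : LGraph p) (v : G.V) (v' : G'.V) :
    ((∀ A : HESGNN d p 1, A.radIs r → (A.clsP G v ↔ A.clsP G' v')) ↔
      (∀ φ : GMLW p, φ.Sentence → φ.radIs r → φ.bindDepth ≤ d →
        (φ.satS G v ↔ φ.satS G' v'))) ∧
    ((∀ (d' : ℕ) (A : HESGNN d' p 1), A.radIs r → (A.clsP G v ↔ A.clsP G' v')) ↔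
      (∀ φ : GMLW p, φ.Sentence → φ.radIs r → (φ.satS G v ↔ φ.satS G' v'))) := by
  classical
  constructor
  · constructor
    · -- HES-GNN separation implies logical separation (construction)
      intro hL φ _ hr1 hd
      have hC := HesAux.can_canon φ (fun _ => none) 0
      obtain ⟨A, hArad, hArun⟩ := HesAux.hes_of_gmlw (p := p) r d (n := 0) (m := 1)
        (fun _ => HesAux.can (fun _ => none) 0 φ)
        (fun _ => ⟨hC, HesAux.can_radIs φ hr1 _ _, by
          rw [HesAux.can_bindDepth]; exact hd⟩)
      have key := HesAux.cls_bridge (r := r) φ hC A hArun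
      rw [← key G v, ← key G' v']
      exact hL A hArad
    · -- logical separation implies HES-GNN separation (invariance)
      intro hR A hArad
      exact HesAux.respects_bridge (r := r) (d := d)
        (fun d' ψ => ψ.radIs r ∧ ψ.bindDepth ≤ d')
        (fun d' => HesAux.good1_closed r d')
        (fun d' ψ m h => ⟨⟨rfl, h.1⟩, by
          show ψ.bindDepth + 1 ≤ d' + 1
          omega⟩)
        G G' v v'
        (fun ψ hψ => by
          rw [← HesAux.can_satS ψ G v, ← HesAux.can_satS ψ G' v']
          exact hR (HesAux.can (fun _ => none) 0 ψ) (HesAux.can_sentence ψ)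
            (HesAux.can_radIs ψ hψ.1 _ _)
            (by rw [HesAux.can_bindDepth]; exact hψ.2))
        A hArad
  · constructor
    · intro hL φ _ hr1
      have hC := HesAux.can_canon φ (fun _ => none) 0
      obtain ⟨A, hArad, hArun⟩ := HesAux.hes_of_gmlw (p := p) r φ.bindDepth
        (n := 0) (m := 1) (fun _ => HesAux.can (fun _ => none) 0 φ)
        (fun _ => ⟨hC, HesAux.can_radIs φ hr1 _ _, by
          rw [HesAux.can_bindDepth]⟩)
      have key := HesAux.cls_bridge (r := r) φ hC A hArun
      rw [← key G v, ← key G' v']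
      exact hL φ.bindDepth A hArad
    · intro hR d' A hArad
      exact HesAux.respects_bridge (r := r) (d := d')
        (fun _ ψ => ψ.radIs r)
        (fun d'' => HesAux.good2_closed r)
        (fun d'' ψ m h => ⟨rfl, h⟩)
        G G' v v'
        (fun ψ hψ => by
          rw [← HesAux.can_satS ψ G v, ← HesAux.can_satS ψ G' v']
          exact hR (HesAux.can (fun _ => none) 0 ψ) (HesAux.can_sentence ψ)
            (HesAux.can_radIs ψ hψ _ _))
        A hArad
end

section
/- Let G, G' be graphs and let d ≥ min(|G|,|G'|). Then G ≡_{WL-IR-d} G' if and only if G and G' are isomorphic. -/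
open Classical

/-! ### Auxiliary development for `wlir_iso` -/

namespace WLIRAux

attribute [local instance] HashSetup.linC

variable {p : ℕ} (H : HashSetup p)

lemma inj_hInit {a b : Fin p → Prop} (h : H.hInit a = H.hInit b) : a = b := by
  have h2 : (Sum.inl a : (Fin p → Prop) ⊕ (H.C × Multiset H.C ⊕ H.C × Prop)) = Sum.inl b :=
    H.inj h
  exact Sum.inl.inj h2

lemma inj_hRefine {c c' : H.C} {m m' : Multiset H.C} (h : H.hRefine c m = H.hRefine c' m') :
    c = c' ∧ m = m' := by
  have h2 : (Sum.inr (Sum.inl (c, m)) : (Fin p → Prop) ⊕ (H.C × Multiset H.C ⊕ H.C × Prop)) =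
      Sum.inr (Sum.inl (c', m')) := H.inj h
  have h3 := Sum.inl.inj (Sum.inr.inj h2)
  exact ⟨congrArg Prod.fst h3, congrArg Prod.snd h3⟩

lemma inj_hIndiv {c c' : H.C} {P Q : Prop} (h : H.hIndiv c P = H.hIndiv c' Q) :
    c = c' ∧ (P ↔ Q) := by
  have h2 : (Sum.inr (Sum.inr (c, P)) : (Fin p → Prop) ⊕ (H.C × Multiset H.C ⊕ H.C × Prop)) =
      Sum.inr (Sum.inr (c', Q)) := H.inj h
  have h3 := Sum.inr.inj (Sum.inr.inj h2)
  exact ⟨congrArg Prod.fst h3, iff_of_eq (congrArg Prod.snd h3)⟩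

/-! #### Number of color classes -/

noncomputable def ncl {V C : Type} [Fintype V] (col : V → C) : ℕ :=
  (Finset.univ.image col).card

lemma ncl_le_card {V C : Type} [Fintype V] (col : V → C) : ncl col ≤ Fintype.card V :=
  le_trans Finset.card_image_le (le_of_eq Finset.card_univ)

lemma exists_g {V C : Type} [Fintype V] (fine coarse : V → C)
    (href : ∀ v w, fine v = fine w → coarse v = coarse w) :
    ∃ g : C → C, ∀ v, coarse v = g (fine v) := by
  refine ⟨fun c => if h : ∃ x, fine x = c then coarse h.choose else c, fun v => ?_⟩
  show coarse v = if h : ∃ x, fine x = fine v then coarse h.choose else fine v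
  rw [dif_pos (⟨v, rfl⟩ : ∃ x, fine x = fine v)]
  exact (href _ _ (Exists.choose_spec (⟨v, rfl⟩ : ∃ x, fine x = fine v))).symm

lemma image_coarse {V C : Type} [Fintype V] (fine coarse : V → C) (g : C → C)
    (hg : ∀ v, coarse v = g (fine v)) :
    Finset.univ.image coarse = (Finset.univ.image fine).image g := by
  rw [Finset.image_image]
  exact Finset.image_congr (fun v _ => hg v)

lemma ncl_mono {V C : Type} [Fintype V] (fine coarse : V → C)
    (href : ∀ v w, fine v = fine w → coarse v = coarse w) : ncl coarse ≤ ncl fine := by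
  obtain ⟨g, hg⟩ := exists_g fine coarse href
  unfold ncl
  rw [image_coarse fine coarse g hg]
  exact Finset.card_image_le

lemma ncl_strict {V C : Type} [Fintype V] (fine coarse : V → C)
    (href : ∀ v w, fine v = fine w → coarse v = coarse w)
    {u w : V} (hc : coarse u = coarse w) (hf : fine u ≠ fine w) :
    ncl coarse < ncl fine := by
  obtain ⟨g, hg⟩ := exists_g fine coarse href
  have h2 : Finset.univ.image coarse ⊆ ((Finset.univ.image fine).erase (fine u)).image g := by
    intro x hx
    rw [image_coarse fine coarse g hg] at hx
    obtain ⟨cf, hcf, rfl⟩ := Finset.mem_image.mp hx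
    obtain ⟨v, -, rfl⟩ := Finset.mem_image.mp hcf
    by_cases hv : fine v = fine u
    · refine Finset.mem_image.mpr ⟨fine w, Finset.mem_erase.mpr
        ⟨Ne.symm hf, Finset.mem_image_of_mem _ (Finset.mem_univ w)⟩, ?_⟩
      rw [← hg w, ← hc, hg u, ← hv]
    · exact Finset.mem_image_of_mem _ (Finset.mem_erase.mpr
        ⟨hv, Finset.mem_image_of_mem _ (Finset.mem_univ v)⟩)
  have h3 : fine u ∈ Finset.univ.image fine := Finset.mem_image_of_mem _ (Finset.mem_univ u)
  calc ncl coarse ≤ (((Finset.univ.image fine).erase (fine u)).image g).card :=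
        Finset.card_le_card h2
    _ ≤ ((Finset.univ.image fine).erase (fine u)).card := Finset.card_image_le
    _ < (Finset.univ.image fine).card := Finset.card_erase_lt_of_mem h3

lemma ncl_pos {V C : Type} [Fintype V] [Nonempty V] (col : V → C) : 1 ≤ ncl col := by
  obtain ⟨v⟩ := (inferInstance : Nonempty V)
  exact Finset.card_pos.mpr ⟨_, Finset.mem_image_of_mem _ (Finset.mem_univ v)⟩

lemma discrete_of_card_le_ncl {V C : Type} [Fintype V] (col : V → C)
    (h : Fintype.card V ≤ ncl col) : Discrete col := by
  have hcard : (Finset.univ.image col).card = Finset.univ.card :=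
    le_antisymm Finset.card_image_le (by rw [Finset.card_univ]; exact h)
  have hinj := Finset.card_image_iff.mp hcard
  intro u w huw
  exact hinj (Finset.mem_coe.mpr (Finset.mem_univ u)) (Finset.mem_coe.mpr (Finset.mem_univ w)) huw

/-! #### Basic WL lemmas -/

lemma mem_nbr {G : LGraph p} {v u : G.V} : u ∈ (G.nbrFinset v).val ↔ G.adj v u := by
  simp [LGraph.nbrFinset]

lemma wlStep_inj {G G' : LGraph p} {col1 : G.V → H.C} {col2 : G'.V → H.C} {v : G.V} {w : G'.V}
    (h : wlStep H G col1 v = wlStep H G' col2 w) :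
    col1 v = col2 w ∧ (G.nbrFinset v).val.map col1 = (G'.nbrFinset w).val.map col2 :=
  inj_hRefine H h

lemma wlIter_peel {G G' : LGraph p} (k : ℕ) {col1 : G.V → H.C} {col2 : G'.V → H.C}
    {v : G.V} {w : G'.V} :
    wlIter H G k col1 v = wlIter H G' k col2 w → col1 v = col2 w := by
  induction k with
  | zero => exact id
  | succ k ih => exact fun h => ih (wlStep_inj H h).1

lemma colMultiset_card (G : LGraph p) (col : G.V → H.C) :
    Multiset.card (colMultiset H G col) = Fintype.card G.V := by
  simp [colMultiset]

lemma mem_colMultiset {G : LGraph p} (col : G.V → H.C) (v : G.V) :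
    col v ∈ colMultiset H G col := by
  simp [colMultiset]

lemma colMultiset_nodup_iff {G : LGraph p} (col : G.V → H.C) :
    (colMultiset H G col).Nodup ↔ Discrete col := by
  constructor
  · intro h u w huw
    exact Multiset.inj_on_of_nodup_map h u (Finset.mem_univ u) w (Finset.mem_univ w) huw
  · intro h
    exact Multiset.Nodup.map (fun a b => h a b) Finset.univ.nodup

lemma classCard_count (G : LGraph p) (col : G.V → H.C) (c : H.C) :
    (Finset.univ.filter (fun v => col v = c)).card = (colMultiset H G col).count c := by
  rw [colMultiset, Multiset.count_map]
  have hval : (Finset.filter (fun v => col v = c) Finset.univ).val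
      = Multiset.filter (fun a => c = col a) Finset.univ.val := by
    rw [Finset.filter_val]
    exact Multiset.filter_congr (fun a _ => eq_comm)
  rw [Finset.card_def, hval]

/-! #### The branching structure of WLIR -/

noncomputable def bigsOf (M : Multiset H.C) : Finset H.C :=
  M.toFinset.filter (fun c => 1 < M.count c)

lemma bigs_eq (G : LGraph p) (col : G.V → H.C) :
    ((Finset.univ.image col).filter
        (fun c => 1 < (Finset.univ.filter (fun v => col v = c)).card))
      = bigsOf H (colMultiset H G col) := by
  unfold bigsOf
  have h1 : (colMultiset H G col).toFinset = Finset.univ.image col := by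
    rw [colMultiset, Multiset.toFinset_map, Finset.val_toFinset]
  rw [h1]
  exact Finset.filter_congr (fun c _ => by rw [classCard_count H G col c])

noncomputable def minBig (M : Multiset H.C) (h : (bigsOf H M).Nonempty) : H.C :=
  (bigsOf H M).min' h

lemma minBig_congr {M M' : Multiset H.C} {h : (bigsOf H M).Nonempty}
    {h' : (bigsOf H M').Nonempty} (hMM : M = M') : minBig H M h = minBig H M' h' := by
  subst hMM; rfl

lemma min'_congr {s t : Finset H.C} {hs : s.Nonempty} {ht : t.Nonempty} (hst : s = t) :
    s.min' hs = t.min' ht := by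
  subst hst; rfl

lemma minBig_mem (M : Multiset H.C) (h : (bigsOf H M).Nonempty) :
    minBig H M h ∈ bigsOf H M :=
  Finset.min'_mem _ h

lemma bigs_nonempty (G : LGraph p) (col : G.V → H.C) (h : ¬ Discrete col) :
    (bigsOf H (colMultiset H G col)).Nonempty := by
  simp only [Discrete, not_forall] at h
  obtain ⟨u, w, hc, hne⟩ := h
  refine ⟨col u, Finset.mem_filter.mpr ⟨Multiset.mem_toFinset.mpr (mem_colMultiset H col u), ?_⟩⟩
  rw [← classCard_count]
  exact Finset.one_lt_card.mpr ⟨u, Finset.mem_filter.mpr ⟨Finset.mem_univ u, rfl⟩,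
    w, Finset.mem_filter.mpr ⟨Finset.mem_univ w, hc.symm⟩, hne⟩

lemma WLIR_succ_pos (G : LGraph p) (d : ℕ) (col : G.V → H.C)
    (h : Discrete (wlIter H G (Fintype.card G.V) col)) :
    WLIR H G (d+1) col
      = .node (colMultiset H G (wlIter H G (Fintype.card G.V) col)) [] := by
  simp only [WLIR]
  rw [dif_pos h]

lemma WLIR_succ_neg (G : LGraph p) (d : ℕ) (col : G.V → H.C)
    (h : ¬ Discrete (wlIter H G (Fintype.card G.V) col))
    (hb : (bigsOf H (colMultiset H G (wlIter H G (Fintype.card G.V) col))).Nonempty) :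
    WLIR H G (d+1) col = .node (colMultiset H G (wlIter H G (Fintype.card G.V) col))
      (((Finset.univ.filter (fun v => wlIter H G (Fintype.card G.V) col v =
          minBig H (colMultiset H G (wlIter H G (Fintype.card G.V) col)) hb)).toList).map
        (fun vi => WLIR H G d
          (fun v => H.hIndiv (wlIter H G (Fintype.card G.V) col v) (v = vi)))) := by
  simp only [WLIR]
  rw [dif_neg h]
  have key : ∀ (s : Finset H.C) (hs : s.Nonempty),
      s = bigsOf H (colMultiset H G (wlIter H G (Fintype.card G.V) col)) →
      CTree.node (colMultiset H G (wlIter H G (Fintype.card G.V) col))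
        (((Finset.univ.filter (fun v => wlIter H G (Fintype.card G.V) col v =
            s.min' hs)).toList).map
          (fun vi => WLIR H G d
            (fun v => H.hIndiv (wlIter H G (Fintype.card G.V) col v) (v = vi))))
      = CTree.node (colMultiset H G (wlIter H G (Fintype.card G.V) col))
        (((Finset.univ.filter (fun v => wlIter H G (Fintype.card G.V) col v =
            minBig H (colMultiset H G (wlIter H G (Fintype.card G.V) col)) hb)).toList).map
          (fun vi => WLIR H G d
            (fun v => H.hIndiv (wlIter H G (Fintype.card G.V) col v) (v = vi)))) := by
    rintro s hs rfl
    rfl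
  exact key _ _ (bigs_eq H G (wlIter H G (Fintype.card G.V) col))

lemma iso_inv {C : Type} {l1 l2 : Multiset C} {cs1 cs2 : List (CTree C)}
    (h : CTree.Iso (.node l1 cs1) (.node l2 cs2)) :
    l1 = l2 ∧ ∃ e : Fin cs1.length ≃ Fin cs2.length,
      ∀ i, CTree.Iso (cs1.get i) (cs2.get (e i)) := by
  cases h with
  | node e hc => exact ⟨rfl, e, hc⟩

lemma WLIR_label (G : LGraph p) (d : ℕ) (col : G.V → H.C) :
    ∃ cs, WLIR H G d col
      = .node (colMultiset H G (wlIter H G (Fintype.card G.V) col)) cs := by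
  cases d with
  | zero => exact ⟨[], rfl⟩
  | succ d =>
    by_cases h : Discrete (wlIter H G (Fintype.card G.V) col)
    · exact ⟨[], WLIR_succ_pos H G d col h⟩
    · exact ⟨_, WLIR_succ_neg H G d col h (bigs_nonempty H G _ h)⟩

/-! #### Stabilization of color refinement -/

lemma stb_succ (G : LGraph p) (col : G.V → H.C)
    (h : ∀ v w, wlStep H G col v = wlStep H G col w ↔ col v = col w) (v w : G.V) :
    wlStep H G (wlStep H G col) v = wlStep H G (wlStep H G col) w
      ↔ wlStep H G col v = wlStep H G col w := by
  constructor
  · exact fun hh => (wlStep_inj H hh).1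
  · intro hh
    obtain ⟨g, hg⟩ := exists_g col (wlStep H G col) (fun a b hab => (h a b).mpr hab)
    obtain ⟨h1, h2⟩ := wlStep_inj H hh
    show H.hRefine (wlStep H G col v) ((G.nbrFinset v).val.map (wlStep H G col))
      = H.hRefine (wlStep H G col w) ((G.nbrFinset w).val.map (wlStep H G col))
    rw [hh]
    congr 1
    calc (G.nbrFinset v).val.map (wlStep H G col)
        = ((G.nbrFinset v).val.map col).map g := by
          rw [Multiset.map_map]
          exact Multiset.map_congr rfl (fun u _ => hg u)
      _ = ((G.nbrFinset w).val.map col).map g := by rw [h2]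
      _ = (G.nbrFinset w).val.map (wlStep H G col) := by
          rw [Multiset.map_map]
          exact (Multiset.map_congr rfl (fun u _ => hg u)).symm

lemma discrete_pred (G : LGraph p) (col : G.V → H.C) (m : ℕ)
    (hm : Fintype.card G.V = m + 1)
    (h : Discrete (wlIter H G (m+1) col)) : Discrete (wlIter H G m col) := by
  by_contra hnd
  set P : ℕ → Prop := fun i => ∀ v w, wlIter H G (i+1) col v = wlIter H G (i+1) col w
      ↔ wlIter H G i col v = wlIter H G i col w with hP
  have hPsucc : ∀ i, P i → P (i+1) := by
    intro i hi v w
    exact stb_succ H G (wlIter H G i col) hi v w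
  have hPmono : ∀ i j, i ≤ j → P i → P j := by
    intro i j hij hi
    induction hij with
    | refl => exact hi
    | step _ ih => exact hPsucc _ ih
  have hnPm : ¬ P m := fun hPm => hnd (fun v w hvw => h v w ((hPm v w).mpr hvw))
  have hnP : ∀ i, i ≤ m → ¬ P i := fun i hi hPi => hnPm (hPmono i m hi hPi)
  have hcount : ∀ i, i ≤ m + 1 → ncl (wlIter H G 0 col) + i ≤ ncl (wlIter H G i col) := by
    intro i
    induction i with
    | zero => intro _; omega
    | succ i ih =>
      intro hi
      have h1 := ih (by omega)
      have hnpi := hnP i (by omega)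
      have hex : ∃ v w, wlIter H G i col v = wlIter H G i col w
          ∧ wlIter H G (i+1) col v ≠ wlIter H G (i+1) col w := by
        by_contra hcon
        push_neg at hcon
        exact hnpi (fun v w => ⟨fun hh => (wlStep_inj H hh).1, hcon v w⟩)
      obtain ⟨v, w, h1', h2'⟩ := hex
      have h3 := ncl_strict (wlIter H G (i+1) col) (wlIter H G i col)
        (fun a b hab => (wlStep_inj H hab).1) h1' h2'
      omega
  have hfin := hcount (m+1) le_rfl
  have h1 : 1 ≤ ncl (wlIter H G 0 col) := by
    have hne : Nonempty G.V := by rw [← Fintype.card_pos_iff]; omega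
    exact ncl_pos _
  have h2 := ncl_le_card (wlIter H G (m+1) col)
  omega

/-! #### The discrete case: matching colors give an isomorphism -/

lemma DISC (G G' : LGraph p) (col1 : G.V → H.C) (col2 : G'.V → H.C)
    (hdisc : Discrete (wlIter H G (Fintype.card G.V) col1))
    (hM : colMultiset H G (wlIter H G (Fintype.card G.V) col1)
        = colMultiset H G' (wlIter H G' (Fintype.card G'.V) col2)) :
    ∃ f : G.V ≃ G'.V, (∀ u v, G.adj u v ↔ G'.adj (f u) (f v)) ∧ ∀ v, col1 v = col2 (f v) := by
  have hcard : Fintype.card G.V = Fintype.card G'.V := by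
    have h := congrArg Multiset.card hM
    rwa [colMultiset_card, colMultiset_card] at h
  have hd2 : Discrete (wlIter H G' (Fintype.card G'.V) col2) :=
    (colMultiset_nodup_iff H _).mp (hM ▸ ((colMultiset_nodup_iff H _).mpr hdisc))
  rcases Nat.eq_zero_or_pos (Fintype.card G.V) with h0 | hpos
  · haveI e1 : IsEmpty G.V := Fintype.card_eq_zero_iff.mp h0
    haveI e2 : IsEmpty G'.V := Fintype.card_eq_zero_iff.mp (hcard ▸ h0)
    exact ⟨Equiv.equivOfIsEmpty _ _, fun u => (e1.false u).elim, fun v => (e1.false v).elim⟩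
  obtain ⟨m, hm⟩ : ∃ m, Fintype.card G.V = m + 1 := ⟨Fintype.card G.V - 1, by omega⟩
  have hm' : Fintype.card G'.V = m + 1 := by omega
  have hp1 : Discrete (wlIter H G m col1) :=
    discrete_pred H G col1 m hm (by rw [← hm]; exact hdisc)
  have hp2 : Discrete (wlIter H G' m col2) :=
    discrete_pred H G' col2 m hm' (by rw [← hm']; exact hd2)
  -- build the bijection
  have hex : ∀ v : G.V, ∃ v' : G'.V,
      wlIter H G' (Fintype.card G'.V) col2 v' = wlIter H G (Fintype.card G.V) col1 v := by
    intro v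
    have hmem : wlIter H G (Fintype.card G.V) col1 v
        ∈ colMultiset H G' (wlIter H G' (Fintype.card G'.V) col2) := by
      rw [← hM]; exact mem_colMultiset H _ v
    rw [colMultiset] at hmem
    obtain ⟨v', _, hv'⟩ := Multiset.mem_map.mp hmem
    exact ⟨v', hv'⟩
  have hex' : ∀ v' : G'.V, ∃ v : G.V,
      wlIter H G (Fintype.card G.V) col1 v = wlIter H G' (Fintype.card G'.V) col2 v' := by
    intro v'
    have hmem : wlIter H G' (Fintype.card G'.V) col2 v'
        ∈ colMultiset H G (wlIter H G (Fintype.card G.V) col1) := by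
      rw [hM]; exact mem_colMultiset H _ v'
    rw [colMultiset] at hmem
    obtain ⟨v, _, hv⟩ := Multiset.mem_map.mp hmem
    exact ⟨v, hv⟩
  choose F hF using hex
  choose Gi hGi using hex'
  have hFG : ∀ v, Gi (F v) = v := fun v => hdisc _ _ (by rw [hGi (F v), hF v])
  have hGF : ∀ v', F (Gi v') = v' := fun v' => hd2 _ _ (by rw [hF (Gi v'), hGi v'])
  have hkey : ∀ v, wlIter H G (Fintype.card G.V) col1 v
      = wlIter H G' (Fintype.card G'.V) col2 (F v) := fun v => (hF v).symm
  have hstep : ∀ v, wlIter H G m col1 v = wlIter H G' m col2 (F v)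
      ∧ (G.nbrFinset v).val.map (wlIter H G m col1)
        = (G'.nbrFinset (F v)).val.map (wlIter H G' m col2) := by
    intro v
    have h := hkey v
    rw [hm, hm'] at h
    exact wlStep_inj H h
  refine ⟨⟨F, Gi, hFG, hGF⟩, ?_, ?_⟩
  · -- adjacency
    have hfwd : ∀ v u, G.adj v u → G'.adj (F v) (F u) := by
      intro v u hadj
      have hmem : wlIter H G m col1 u ∈ (G.nbrFinset v).val.map (wlIter H G m col1) :=
        Multiset.mem_map_of_mem _ (mem_nbr.mpr hadj)
      rw [(hstep v).2] at hmem
      obtain ⟨u', hu'mem, hu'⟩ := Multiset.mem_map.mp hmem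
      have heq : u' = F u := hp2 _ _ (by rw [hu', (hstep u).1])
      rw [heq] at hu'mem
      exact mem_nbr.mp hu'mem
    have hbwd : ∀ v' u', G'.adj v' u' → G.adj (Gi v') (Gi u') := by
      intro v' u' hadj
      have h2 := (hstep (Gi v')).2
      rw [hGF v'] at h2
      have hmem : wlIter H G' m col2 u' ∈ (G'.nbrFinset v').val.map (wlIter H G' m col2) :=
        Multiset.mem_map_of_mem _ (mem_nbr.mpr hadj)
      rw [← h2] at hmem
      obtain ⟨u, humem, hu⟩ := Multiset.mem_map.mp hmem
      have heq : u = Gi u' := by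
        apply hp1
        rw [hu]
        have h3 := (hstep (Gi u')).1
        rw [hGF u'] at h3
        exact h3.symm
      rw [heq] at humem
      exact mem_nbr.mp humem
    intro u v
    simp only [Equiv.coe_fn_mk]
    constructor
    · exact hfwd u v
    · intro h
      have h2 := hbwd (F u) (F v) h
      rwa [hFG u, hFG v] at h2
  · -- colors
    intro v
    simp only [Equiv.coe_fn_mk]
    have h := hkey v
    rw [hm, hm'] at h
    exact wlIter_peel H (m+1) h

/-! #### The main completeness induction -/

lemma MAIN : ∀ (d : ℕ) (G G' : LGraph p) (col1 : G.V → H.C) (col2 : G'.V → H.C),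
    Fintype.card G.V ≤ d + ncl (wlIter H G (Fintype.card G.V) col1) →
    CTree.Iso (WLIR H G d col1) (WLIR H G' d col2) →
    ∃ f : G.V ≃ G'.V, (∀ u v, G.adj u v ↔ G'.adj (f u) (f v)) ∧ ∀ v, col1 v = col2 (f v) := by
  intro d
  induction d with
  | zero =>
    intro G G' col1 col2 hbud hiso
    have hdisc : Discrete (wlIter H G (Fintype.card G.V) col1) :=
      discrete_of_card_le_ncl _ (by omega)
    have hM := (iso_inv (show CTree.Iso
      (.node (colMultiset H G (wlIter H G (Fintype.card G.V) col1)) [])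
      (.node (colMultiset H G' (wlIter H G' (Fintype.card G'.V) col2)) []) from hiso)).1
    exact DISC H G G' col1 col2 hdisc hM
  | succ d ih =>
    intro G G' col1 col2 hbud hiso
    by_cases hdisc : Discrete (wlIter H G (Fintype.card G.V) col1)
    · rw [WLIR_succ_pos H G d col1 hdisc] at hiso
      obtain ⟨cs2, hcs2⟩ := WLIR_label H G' (d+1) col2
      rw [hcs2] at hiso
      exact DISC H G G' col1 col2 hdisc (iso_inv hiso).1
    · -- both trees branch
      have hb1 : (bigsOf H (colMultiset H G (wlIter H G (Fintype.card G.V) col1))).Nonempty :=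
        bigs_nonempty H G _ hdisc
      have hM : colMultiset H G (wlIter H G (Fintype.card G.V) col1)
          = colMultiset H G' (wlIter H G' (Fintype.card G'.V) col2) := by
        obtain ⟨cs2, hcs2⟩ := WLIR_label H G' (d+1) col2
        obtain ⟨cs1, hcs1⟩ := WLIR_label H G (d+1) col1
        have hiso' := hiso
        rw [hcs1, hcs2] at hiso'
        exact (iso_inv hiso').1
      have hcard : Fintype.card G.V = Fintype.card G'.V := by
        have h := congrArg Multiset.card hM
        rwa [colMultiset_card, colMultiset_card] at h
      have hdisc2 : ¬ Discrete (wlIter H G' (Fintype.card G'.V) col2) := by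
        intro hd2
        exact hdisc ((colMultiset_nodup_iff H _).mp
          (by rw [hM]; exact (colMultiset_nodup_iff H _).mpr hd2))
      have hb2 : (bigsOf H (colMultiset H G' (wlIter H G' (Fintype.card G'.V) col2))).Nonempty :=
        bigs_nonempty H G' _ hdisc2
      have hceq : minBig H _ hb2 = minBig H _ hb1 := minBig_congr H hM.symm
      rw [WLIR_succ_neg H G d col1 hdisc hb1,
          WLIR_succ_neg H G' d col2 hdisc2 hb2, hceq] at hiso
      obtain ⟨-, e, he⟩ := iso_inv hiso
      -- set up the class lists
      set c : H.C := minBig H (colMultiset H G (wlIter H G (Fintype.card G.V) col1)) hb1 with hc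
      set L1 := (Finset.univ.filter
        (fun v => wlIter H G (Fintype.card G.V) col1 v = c)).toList with hL1
      set L2 := (Finset.univ.filter
        (fun v => wlIter H G' (Fintype.card G'.V) col2 v = c)).toList with hL2
      have hcbig : c ∈ bigsOf H (colMultiset H G (wlIter H G (Fintype.card G.V) col1)) :=
        minBig_mem H _ hb1
      have hccount : 1 < (colMultiset H G (wlIter H G (Fintype.card G.V) col1)).count c :=
        (Finset.mem_filter.mp hcbig).2
      have hlen1 : L1.length = (colMultiset H G (wlIter H G (Fintype.card G.V) col1)).count c := by
        rw [hL1, Finset.length_toList, classCard_count]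
      have hpos1 : 0 < (List.map (fun vi => WLIR H G d
          (fun v => H.hIndiv (wlIter H G (Fintype.card G.V) col1 v) (v = vi))) L1).length := by
        rw [List.length_map]; omega
      -- pick the first individualized vertex on each side
      set i0 : Fin (List.map (fun vi => WLIR H G d
          (fun v => H.hIndiv (wlIter H G (Fintype.card G.V) col1 v) (v = vi))) L1).length :=
        ⟨0, hpos1⟩ with hi0
      have hlt1 : (0:ℕ) < L1.length := by
        have := hpos1; rwa [List.length_map] at this
      have hlt2 : ((e i0 : Fin _) : ℕ) < L2.length := by
        have h1 := (e i0).2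
        have h2 : (List.map (fun vi => WLIR H G' d
            (fun v => H.hIndiv (wlIter H G' (Fintype.card G'.V) col2 v) (v = vi))) L2).length
            = L2.length := List.length_map _
        omega
      set vi : G.V := L1.get ⟨0, hlt1⟩ with hvi
      set vj : G'.V := L2.get ⟨(e i0 : Fin _), hlt2⟩ with hvj
      have hchild := he i0
      simp only [List.get_eq_getElem, List.getElem_map] at hchild
      -- hchild : Iso (WLIR G d colA) (WLIR G' d colB)
      have hvimem : vi ∈ Finset.univ.filter
          (fun v => wlIter H G (Fintype.card G.V) col1 v = c) := by
        rw [← Finset.mem_toList, ← hL1, hvi]; exact List.get_mem _ _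
      have hvic : wlIter H G (Fintype.card G.V) col1 vi = c := (Finset.mem_filter.mp hvimem).2
      -- budget for the recursive call
      have hbud' : Fintype.card G.V ≤ d + ncl (wlIter H G (Fintype.card G.V)
          (fun v => H.hIndiv (wlIter H G (Fintype.card G.V) col1 v) (v = vi))) := by
        have hstrict : ncl (wlIter H G (Fintype.card G.V) col1)
            < ncl (fun v => H.hIndiv (wlIter H G (Fintype.card G.V) col1 v) (v = vi)) := by
          obtain ⟨w, hwmem, hwne⟩ := Finset.exists_mem_ne
            (by rw [classCard_count]; exact hccount) vi
          have hwc : wlIter H G (Fintype.card G.V) col1 w = c := (Finset.mem_filter.mp hwmem).2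
          refine ncl_strict _ _ (fun a b hab => (inj_hIndiv H hab).1)
            (hc := hwc.trans hvic.symm) ?_
          intro hcontra
          exact hwne ((inj_hIndiv H hcontra).2.mpr rfl)
        have hmono2 : ncl (fun v => H.hIndiv (wlIter H G (Fintype.card G.V) col1 v) (v = vi))
            ≤ ncl (wlIter H G (Fintype.card G.V)
              (fun v => H.hIndiv (wlIter H G (Fintype.card G.V) col1 v) (v = vi))) :=
          ncl_mono _ _ (fun a b hab => wlIter_peel H _ hab)
        omega
      obtain ⟨f, hadj, hcolAB⟩ := ih G G' _ _ hbud' hchild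
      refine ⟨f, hadj, fun v => ?_⟩
      have h2 := (inj_hIndiv H (hcolAB v)).1
      rw [hcard] at h2
      exact wlIter_peel H _ h2

/-! #### Soundness: isomorphic graphs give isomorphic IR trees -/

lemma get_of_indexOf {α : Type} [DecidableEq α] (l : List α) (a : α) (ha : a ∈ l)
    (k : Fin l.length) (hk : (k : ℕ) = l.idxOf a) : l.get k = a := by
  have h1 : k = ⟨l.idxOf a, List.idxOf_lt_length_iff.mpr ha⟩ := Fin.ext hk
  rw [h1]
  exact List.idxOf_get _

lemma FWD {G G' : LGraph p} (f : G.V ≃ G'.V)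
    (hadj : ∀ u v, G.adj u v ↔ G'.adj (f u) (f v)) :
    ∀ (d : ℕ) (col1 : G.V → H.C) (col2 : G'.V → H.C), (∀ v, col2 (f v) = col1 v) →
    CTree.Iso (WLIR H G d col1) (WLIR H G' d col2) := by
  have hcard : Fintype.card G'.V = Fintype.card G.V := (Fintype.card_congr f).symm
  have hnbr : ∀ v, (G'.nbrFinset (f v)).val = (G.nbrFinset v).val.map f := by
    intro v
    refine ((G'.nbrFinset (f v)).nodup.ext ((G.nbrFinset v).nodup.map f.injective)).mpr ?_
    intro a
    rw [mem_nbr, Multiset.mem_map]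
    constructor
    · intro h
      refine ⟨f.symm a, ?_, f.apply_symm_apply a⟩
      rw [mem_nbr]
      apply (hadj v (f.symm a)).mpr
      rwa [f.apply_symm_apply]
    · rintro ⟨u, hu, rfl⟩
      exact (hadj v u).mp (mem_nbr.mp hu)
  have hstep : ∀ (col1 : G.V → H.C) (col2 : G'.V → H.C), (∀ v, col2 (f v) = col1 v) →
      ∀ v, wlStep H G' col2 (f v) = wlStep H G col1 v := by
    intro col1 col2 hc v
    unfold wlStep
    rw [hc v, hnbr v, Multiset.map_map]
    congr 1
    exact Multiset.map_congr rfl (fun u _ => hc u)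
  have hiter : ∀ (k : ℕ) (col1 : G.V → H.C) (col2 : G'.V → H.C), (∀ v, col2 (f v) = col1 v) →
      ∀ v, wlIter H G' k col2 (f v) = wlIter H G k col1 v := by
    intro k
    induction k with
    | zero => exact fun _ _ hc => hc
    | succ k ih => exact fun col1 col2 hc v => hstep _ _ (ih col1 col2 hc) v
  have huniv : (Finset.univ : Finset G'.V).val = (Finset.univ : Finset G.V).val.map f := by
    refine (Finset.univ.nodup.ext (Finset.univ.nodup.map f.injective)).mpr ?_
    intro a
    simp only [Finset.mem_val, Finset.mem_univ, true_iff, Multiset.mem_map]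
    exact ⟨f.symm a, by simp, f.apply_symm_apply a⟩
  have hMeq : ∀ (col1 : G.V → H.C) (col2 : G'.V → H.C), (∀ v, col2 (f v) = col1 v) →
      colMultiset H G' col2 = colMultiset H G col1 := by
    intro col1 col2 hc
    unfold colMultiset
    rw [huniv, Multiset.map_map]
    exact Multiset.map_congr rfl (fun u _ => hc u)
  intro d
  induction d with
  | zero =>
    intro col1 col2 hc
    have hM : colMultiset H G' (wlIter H G' (Fintype.card G'.V) col2)
        = colMultiset H G (wlIter H G (Fintype.card G.V) col1) := by
      rw [hcard]
      exact hMeq _ _ (hiter (Fintype.card G.V) col1 col2 hc)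
    show CTree.Iso (.node _ []) (.node _ [])
    rw [hM]
    exact CTree.Iso.node (Equiv.refl _) (fun i => (Nat.not_lt_zero _ i.2).elim)
  | succ d ih =>
    intro col1 col2 hc
    have hc' : ∀ v, wlIter H G' (Fintype.card G'.V) col2 (f v)
        = wlIter H G (Fintype.card G.V) col1 v := by
      rw [hcard]
      exact hiter _ col1 col2 hc
    have hM : colMultiset H G' (wlIter H G' (Fintype.card G'.V) col2)
        = colMultiset H G (wlIter H G (Fintype.card G.V) col1) :=
      hMeq _ _ hc'
    by_cases hdisc : Discrete (wlIter H G (Fintype.card G.V) col1)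
    · have hdisc2 : Discrete (wlIter H G' (Fintype.card G'.V) col2) := by
        intro u w huw
        have h1 : ∀ u', wlIter H G' (Fintype.card G'.V) col2 u'
            = wlIter H G (Fintype.card G.V) col1 (f.symm u') := by
          intro u'
          rw [← hc' (f.symm u'), f.apply_symm_apply]
        have h2 : f.symm u = f.symm w := by
          apply hdisc
          rw [← h1 u, ← h1 w]
          exact huw
        exact f.symm.injective h2
      rw [WLIR_succ_pos H G d col1 hdisc, WLIR_succ_pos H G' d col2 hdisc2, hM]
      exact CTree.Iso.node (Equiv.refl _) (fun i => (Nat.not_lt_zero _ i.2).elim)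
    · have hdisc2 : ¬ Discrete (wlIter H G' (Fintype.card G'.V) col2) := by
        intro hd2
        apply hdisc
        intro u w huw
        have h2 := hd2 (f u) (f w) (by rw [hc' u, hc' w]; exact huw)
        exact f.injective h2
      have hb1 := bigs_nonempty H G _ hdisc
      have hb2 := bigs_nonempty H G' _ hdisc2
      rw [WLIR_succ_neg H G d col1 hdisc hb1, WLIR_succ_neg H G' d col2 hdisc2 hb2]
      have hcmin : minBig H _ hb2 = minBig H _ hb1 := minBig_congr H hM
      rw [hcmin, hM]
      set c := minBig H (colMultiset H G (wlIter H G (Fintype.card G.V) col1)) hb1 with hcdef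
      set S1 := Finset.univ.filter
        (fun v => wlIter H G (Fintype.card G.V) col1 v = c) with hS1
      set S2 := Finset.univ.filter
        (fun v => wlIter H G' (Fintype.card G'.V) col2 v = c) with hS2
      set L1 := S1.toList with hL1
      set L2 := S2.toList with hL2
      have hmemS : ∀ v : G.V, f v ∈ S2 ↔ v ∈ S1 := by
        intro v
        rw [hS1, hS2, Finset.mem_filter, Finset.mem_filter, hc' v]
        simp
      have hmemL2 : ∀ i : Fin L1.length, f (L1.get i) ∈ L2 := by
        intro i
        rw [hL2, Finset.mem_toList]
        exact (hmemS _).mpr (by rw [← Finset.mem_toList, ← hL1]; exact List.get_mem _ _)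
      have hmemL1 : ∀ j : Fin L2.length, f.symm (L2.get j) ∈ L1 := by
        intro j
        rw [hL1, Finset.mem_toList]
        apply (hmemS _).mp
        rw [f.apply_symm_apply, ← Finset.mem_toList, ← hL2]
        exact List.get_mem _ _
      set F1 : Fin L1.length → Fin L2.length := fun i =>
        ⟨L2.idxOf (f (L1.get i)), List.idxOf_lt_length_iff.mpr (hmemL2 i)⟩ with hF1
      set F2 : Fin L2.length → Fin L1.length := fun j =>
        ⟨L1.idxOf (f.symm (L2.get j)), List.idxOf_lt_length_iff.mpr (hmemL1 j)⟩ with hF2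
      have hF21 : ∀ i, F2 (F1 i) = i := by
        intro i
        rw [hF1, hF2]
        apply Fin.ext
        show L1.idxOf (f.symm (L2.get ⟨L2.idxOf (f (L1.get i)), _⟩)) = (i : ℕ)
        rw [List.idxOf_get, f.symm_apply_apply]
        exact List.get_idxOf (Finset.nodup_toList _) i
      have hF12 : ∀ j, F1 (F2 j) = j := by
        intro j
        rw [hF1, hF2]
        apply Fin.ext
        show L2.idxOf (f (L1.get ⟨L1.idxOf (f.symm (L2.get j)), _⟩)) = (j : ℕ)
        rw [List.idxOf_get, f.apply_symm_apply]
        exact List.get_idxOf (Finset.nodup_toList _) j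
      have hlen1 : (List.map (fun vi => WLIR H G d
          (fun v => H.hIndiv (wlIter H G (Fintype.card G.V) col1 v) (v = vi))) L1).length
          = L1.length := List.length_map _
      have hlen2 : (List.map (fun vi => WLIR H G' d
          (fun v => H.hIndiv (wlIter H G' (Fintype.card G'.V) col2 v) (v = vi))) L2).length
          = L2.length := List.length_map _
      set E := (finCongr hlen1).trans
        ((Equiv.mk F1 F2 hF21 hF12).trans (finCongr hlen2).symm) with hE
      refine CTree.Iso.node E ?_
      intro i
      have hEapp : finCongr hlen2 (E i) = F1 (finCongr hlen1 i) := by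
        rw [hE]
        simp only [Equiv.trans_apply, Equiv.coe_fn_mk, Equiv.apply_symm_apply]
      have hget2 : L2.get (finCongr hlen2 (E i)) = f (L1.get (finCongr hlen1 i)) := by
        rw [hEapp, hF1]
        exact List.idxOf_get _
      simp only [List.get_eq_getElem, List.getElem_map]
      apply ih
      intro v
      rw [hc' v]
      congr 1
      apply propext
      constructor
      · intro h
        exact f.injective (h.trans hget2)
      · intro h
        exact (congrArg f h).trans hget2.symm

end WLIRAux
/-- For `d ≥ min(|G|,|G'|)`: `G ≡_{WL-IR-d} G'` iff `G ≅ G'`. -/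
theorem wlir_iso (p : ℕ) (H : HashSetup p) (G G' : LGraph p) (d : ℕ)
    (hd : min (Fintype.card G.V) (Fintype.card G'.V) ≤ d) :
    WLIRequiv H G G' d ↔ G.Iso G' := by
  constructor
  · intro h
    unfold WLIRequiv at h
    have hM : colMultiset H G (wlIter H G (Fintype.card G.V) (initCol H G))
        = colMultiset H G' (wlIter H G' (Fintype.card G'.V) (initCol H G')) := by
      obtain ⟨cs1, hcs1⟩ := WLIRAux.WLIR_label H G d (initCol H G)
      obtain ⟨cs2, hcs2⟩ := WLIRAux.WLIR_label H G' d (initCol H G')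
      have h' := h
      rw [hcs1, hcs2] at h'
      exact (WLIRAux.iso_inv h').1
    have hcard : Fintype.card G.V = Fintype.card G'.V := by
      have hcc := congrArg Multiset.card hM
      rwa [WLIRAux.colMultiset_card, WLIRAux.colMultiset_card] at hcc
    have hbud : Fintype.card G.V ≤ d + WLIRAux.ncl
        (wlIter H G (Fintype.card G.V) (initCol H G)) := by
      have h1 : Fintype.card G.V ≤ d := by omega
      omega
    obtain ⟨f, hadj, hcol⟩ := WLIRAux.MAIN H d G G' (initCol H G) (initCol H G') hbud h
    refine ⟨f, hadj, fun v i => ?_⟩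
    have hlab : G.lab v = G'.lab (f v) := WLIRAux.inj_hInit H (hcol v)
    rw [hlab]
  · rintro ⟨f, hadj, hlab⟩
    refine WLIRAux.FWD H f hadj d _ _ (fun v => ?_)
    unfold initCol
    congr 1
    funext i
    exact propext (hlab v i).symm
end
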